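/- arXiv:1409.6657 — 3 statements merged into one kernel-verified Lean document; each statement's English description precedes it below -/
import Mathlib

section
/- The Castelnuovo–Mumford regularity of a Gorenstein Koszul standard graded ring S/I is at most projdim(S/I) - lp₂(S/I) + 1. -/
/-- The length of the linear strand `lp₂ = max {i | b_{i,i+1} ≠ 0}` of a Betti table. -/
noncomputable def lp2T (b : ℕ → ℕ → ℕ) : ℕ := sSup {i | b i (i + 1) ≠ 0}

/-- The regularity of a Gorenstein Koszul standard graded ring `S/I` is at most
`projdim(S/I) - lp₂(S/I) + 1`.  Here the ring is modelled by its (finitely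
supported) Betti table `b`, with projective dimension `p` and regularity `r`;
standard gradedness gives `b_{0,0} = 1` and `b_{0,j} = 0` for `j ≠ 0`, Koszulness
gives Backelin's bound `t_i ≤ 2i`, and Gorensteinness gives the Poincaré duality
`b_{i,j} = b_{p-i,p+r-j}`. -/
theorem stmt7 (b : ℕ → ℕ → ℕ) (p r : ℕ)
    (hfin : (Function.support fun q : ℕ × ℕ => b q.1 q.2).Finite)
    (hproj : IsGreatest {i | ∃ j, b i j ≠ 0} p)
    (hreg : IsGreatest {d | ∃ i, b i (i + d) ≠ 0} r)
    (hb00 : b 0 0 = 1) (hb0 : ∀ j ≠ 0, b 0 j = 0)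
    (hkoszul : ∀ i j, b i j ≠ 0 → j ≤ 2 * i)
    (hgor : ∀ i ≤ p, ∀ j ≤ p + r, b i j = b (p - i) (p + r - j)) :
    r ≤ p - lp2T b + 1 := by
  set L := lp2T b with hL
  rcases Nat.eq_zero_or_pos r with hr | hr
  · omega
  have hbase : b p (p + r) ≠ 0 := by
    have h := hgor 0 (Nat.zero_le _) 0 (Nat.zero_le _)
    simp only [Nat.sub_zero, hb00] at h
    omega
  by_cases hne : {i | b i (i + 1) ≠ 0}.Nonempty
  · have hbdd : BddAbove {i | b i (i + 1) ≠ 0} :=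
      ⟨p, fun i hi => hproj.2 ⟨i + 1, hi⟩⟩
    have hmem : L ∈ {i | b i (i + 1) ≠ 0} := Nat.sSup_mem hne hbdd
    have hLp : L ≤ p := hproj.2 ⟨L + 1, hmem⟩
    have hdual := hgor L hLp (L + 1) (by omega)
    have hk := hkoszul (p - L) (p + r - (L + 1)) (by rw [← hdual]; exact hmem)
    omega
  · have hL0 : L = 0 := by
      simp [hL, lp2T, Set.not_nonempty_iff_eq_empty.mp hne]
    have hk := hkoszul p (p + r) hbase
    omega
end

section
/- Let Δ be a banner (d-1)-dimensional simplicial complex with d ≥ 3. Then every induced subcomplex Γ of Δ with H̃_{d-2}(Γ) ≠ 0 has at least 2d - 2 vertices. -/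
open Finset

/-- An abstract simplicial complex on a finite linearly ordered vertex set `V`
(containing the empty face). -/
structure SComplex (V : Type) [Fintype V] [LinearOrder V] where
  faces : Set (Finset V)
  empty_mem : (∅ : Finset V) ∈ faces
  down_closed : ∀ ⦃F G : Finset V⦄, F ∈ faces → G ⊆ F → G ∈ faces

namespace SComplex

variable {V : Type} [Fintype V] [LinearOrder V]

/-- Faces of cardinality `j`. -/
def simplex (K : SComplex V) (j : ℕ) := {F : Finset V // F ∈ K.faces ∧ F.card = j}

/-- Simplicial chains supported on faces of cardinality `j` (so `j = n + 1` gives the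
`n`-dimensional chains, and `j = 0` corresponds to the empty face, yielding
*reduced* homology below). -/
abbrev chains (R : Type) [CommRing R] (K : SComplex V) (j : ℕ) := K.simplex j →₀ R

/-- The simplicial boundary map, from chains on faces of cardinality `j + 1`
to chains on faces of cardinality `j`. -/
noncomputable def bdry (R : Type) [CommRing R] (K : SComplex V) (j : ℕ) :
    K.chains R (j + 1) →ₗ[R] K.chains R j :=
  Finsupp.lsum R fun s => LinearMap.toSpanSingleton R _
    (∑ v ∈ s.1.attach, ((-1 : R) ^ ((s.1.filter (· < v.1)).card)) •
      Finsupp.single (⟨s.1.erase v.1, K.down_closed s.2.1 (Finset.erase_subset _ _),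
        by simp [Finset.card_erase_of_mem v.2, s.2.2]⟩ : K.simplex j) (1 : R))

/-- Reduced `n`-cycles (chains on faces of cardinality `n + 1` with zero boundary). -/
noncomputable def cycles (R : Type) [CommRing R] (K : SComplex V) (n : ℕ) :
    Submodule R (K.chains R (n + 1)) := LinearMap.ker (K.bdry R n)

/-- Reduced `n`-boundaries. -/
noncomputable def bdries (R : Type) [CommRing R] (K : SComplex V) (n : ℕ) :
    Submodule R (K.chains R (n + 1)) := LinearMap.range (K.bdry R (n + 1))

/-- Reduced simplicial homology of `K` in dimension `n` with coefficients in `R`,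
realized as the image of the cycles in the chains modulo the boundaries. -/
noncomputable abbrev Hred (R : Type) [CommRing R] (K : SComplex V) (n : ℕ) :=
  ↥(Submodule.map (K.bdries R n).mkQ (K.cycles R n))

/-- The induced subcomplex on a vertex subset `W`. -/
def induced (K : SComplex V) (W : Finset V) : SComplex V where
  faces := {F | F ∈ K.faces ∧ F ⊆ W}
  empty_mem := ⟨K.empty_mem, Finset.empty_subset _⟩
  down_closed := fun _ _ hF hG => ⟨K.down_closed hF.1 hG, hG.trans hF.2⟩

/-- The underlying graph (1-skeleton) of a simplicial complex. -/
def skeleton (K : SComplex V) : SimpleGraph V where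
  Adj u v := u ≠ v ∧ ({u, v} : Finset V) ∈ K.faces
  symm := ⟨by
    intro u v h
    refine ⟨h.1.symm, ?_⟩
    rw [Finset.pair_comm]
    exact h.2⟩
  loopless := ⟨fun v h => h.1 rfl⟩

/-- The vertex set of a simplicial complex. -/
def vertexSet (K : SComplex V) : Set V := {v | {v} ∈ K.faces}

/-- A set of vertices is complete if its elements are pairwise adjacent. -/
def IsComplete (K : SComplex V) (W : Finset V) : Prop :=
  ∀ u ∈ W, ∀ v ∈ W, u ≠ v → ({u, v} : Finset V) ∈ K.faces

/-- A complex is flag if it is the clique complex of its 1-skeleton. -/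
def IsFlag (K : SComplex V) : Prop := ∀ W : Finset V, K.IsComplete W → W ∈ K.faces

/-- One plus the dimension of `K`: the maximal cardinality of a face. -/
noncomputable def dimP1 (K : SComplex V) : ℕ := sSup {j | ∃ F ∈ K.faces, F.card = j}

/-- `K` is pure, with all facets of cardinality `d`. -/
def Pure (K : SComplex V) (d : ℕ) : Prop :=
  ∀ F ∈ K.faces, ∃ G ∈ K.faces, F ⊆ G ∧ G.card = d

/-- `K` is a minimal `n`-cycle over `R`: it is pure `n`-dimensional and supports
precisely one homology `n`-class (up to scalars), whose support is all of `K`. -/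
def IsMinimalCycle (R : Type) [CommRing R] (K : SComplex V) (n : ℕ) : Prop :=
  K.dimP1 = n + 1 ∧ K.Pure (n + 1) ∧
    ∃ ζ ∈ K.cycles R n, (∀ s : K.simplex (n + 1), ζ s ≠ 0) ∧
      ∀ z ∈ K.cycles R n, ∃ c : R, z = c • ζ

end SComplex

/-- Graded Betti numbers of the Stanley–Reisner ring of `K` over `k`, via
Hochster's formula: `b_{i,j} = ∑_{#W = j} dim_k H̃_{j-i-1}(K_W)`. -/
noncomputable def bettiH (k : Type) [Field k] {V : Type} [Fintype V] [LinearOrder V]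
    (K : SComplex V) (i j : ℕ) : ℕ :=
  ∑ W ∈ Finset.powersetCard j (Finset.univ : Finset V),
    Module.finrank k (SComplex.Hred k (K.induced W) (j - i - 1))

/-- A graph is `m`-connected if it has at least `m` vertices and removing
any set of fewer than `m` vertices leaves a connected graph. -/
def KConn {V : Type} [Fintype V] (G : SimpleGraph V) (m : ℕ) : Prop :=
  m ≤ Fintype.card V ∧
    ∀ S : Finset V, S.card < m → (SimpleGraph.induce ((↑S : Set V)ᶜ) G).Connected

/-- The vertex connectivity of a graph: the largest `m` such that it is `m`-connected. -/
noncomputable def connectivity {V : Type} [Fintype V] (G : SimpleGraph V) : ℕ :=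
  sSup {m | KConn G m}


namespace SComplex

variable {V : Type} [Fintype V] [LinearOrder V]

/-- The link of a face `σ` of `K`. -/
def link (K : SComplex V) (s : Finset V) (hs : s ∈ K.faces) : SComplex V where
  faces := {t | t ∩ s = ∅ ∧ t ∪ s ∈ K.faces}
  empty_mem := ⟨Finset.empty_inter s, by simpa using hs⟩
  down_closed := by
    intro F G hF hG
    constructor
    · rw [← Finset.subset_empty, ← hF.1]
      exact Finset.inter_subset_inter hG (Finset.Subset.refl s)
    · exact K.down_closed hF.2 (Finset.union_subset_union hG (Finset.Subset.refl s))

/-- The degree of a face: the maximal cardinality of a facet containing it. -/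
noncomputable def degree (K : SComplex V) (s : Finset V) : ℕ :=
  sSup {j | ∃ F ∈ K.faces, s ⊆ F ∧ F.card = j}

/-- `K` is banner if every critical complete set of size at least `dim K + 1`
is a face of `K`. -/
def IsBanner (K : SComplex V) : Prop :=
  ∀ W : Finset V, K.IsComplete W → (∃ v ∈ W, W.erase v ∈ K.faces) →
    K.dimP1 ≤ W.card → W ∈ K.faces

/-- `K` is (isomorphic to) the boundary of the 2-simplex. -/
def IsBdTwoSimplex (K : SComplex V) : Prop :=
  ∃ a b c : V, a ≠ b ∧ a ≠ c ∧ b ≠ c ∧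
    K.faces = {F | F ⊆ ({a, b, c} : Finset V) ∧ F ≠ ({a, b, c} : Finset V)}

/-- The banner number of `K`: the least `b` such that the link of every face of
cardinality `b` and degree `dim K + 1` is banner or the boundary of the 2-simplex. -/
noncomputable def bannerNumber (K : SComplex V) : ℕ :=
  sInf {b | ∀ s : Finset V, ∀ hs : s ∈ K.faces, s.card = b → K.degree s = K.dimP1 →
    IsBanner (K.link s hs) ∨ IsBdTwoSimplex (K.link s hs)}

end SComplex


namespace BannerAux
set_option linter.unusedSectionVars false
variable (R : Type) [CommRing R] {V : Type} [Fintype V] [LinearOrder V]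

noncomputable def eps (F : Finset V) (v : V) : R := (-1) ^ (F.filter (· < v)).card

noncomputable def DF : (Finset V →₀ R) →ₗ[R] (Finset V →₀ R) :=
  Finsupp.lsum R fun F => LinearMap.toSpanSingleton R _
    (∑ v ∈ F, eps R F v • Finsupp.single (F.erase v) (1 : R))

noncomputable def insL (v : V) : (Finset V →₀ R) →ₗ[R] (Finset V →₀ R) :=
  Finsupp.lsum R fun F => LinearMap.toSpanSingleton R _
    (if v ∈ F then 0 else eps R F v • Finsupp.single (insert v F) (1 : R))

noncomputable def delL (v : V) : (Finset V →₀ R) →ₗ[R] (Finset V →₀ R) :=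
  Finsupp.lsum R fun F => LinearMap.toSpanSingleton R _
    (if v ∈ F then eps R F v • Finsupp.single (F.erase v) (1 : R) else 0)

variable {R}

lemma eps_sq (F : Finset V) (v : V) : (eps R F v) * eps R F v = 1 := by
  rw [eps, ← pow_add]
  exact Even.neg_one_pow ⟨_, rfl⟩

lemma filter_lt_erase (F : Finset V) (v : V) :
    ((F.erase v).filter (· < v)) = F.filter (· < v) := by
  rw [Finset.filter_erase]
  exact Finset.erase_eq_of_notMem (by simp)

lemma filter_lt_insert (F : Finset V) (v : V) :
    ((insert v F).filter (· < v)) = F.filter (· < v) := by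
  rw [Finset.filter_insert]
  simp

lemma eps_erase_self (F : Finset V) (v : V) : eps R (F.erase v) v = eps R F v := by
  rw [eps, eps, filter_lt_erase]

lemma eps_insert_self (F : Finset V) (v : V) : eps R (insert v F) v = eps R F v := by
  rw [eps, eps, filter_lt_insert]

lemma eps_erase {F : Finset V} {u : V} (hu : u ∈ F) (v : V) :
    eps R (F.erase u) v = (if u < v then -1 else 1) * eps R F v := by
  rw [eps, eps, Finset.filter_erase]
  by_cases h : u < v
  · have hmem : u ∈ F.filter (· < v) := Finset.mem_filter.2 ⟨hu, h⟩
    obtain ⟨k, hk⟩ : ∃ k, (F.filter (· < v)).card = k + 1 :=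
      Nat.exists_eq_succ_of_ne_zero (Finset.card_ne_zero_of_mem hmem)
    rw [Finset.card_erase_of_mem hmem, if_pos h, hk]
    simp [pow_succ]
  · rw [Finset.erase_eq_of_notMem (by simp [h]), if_neg h, one_mul]


lemma eps_insert {F : Finset V} {v : V} (hv : v ∉ F) (u : V) :
    eps R (insert v F) u = (if v < u then -1 else 1) * eps R F u := by
  rw [eps, eps, Finset.filter_insert]
  by_cases h : v < u
  · rw [if_pos h, if_pos h, Finset.card_insert_of_notMem (fun hc => hv (Finset.mem_of_mem_filter _ hc))]
    simp [pow_succ]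
  · rw [if_neg h, if_neg h, one_mul]

lemma DF_single (F : Finset V) (c : R) :
    DF R (Finsupp.single F c) = c • ∑ v ∈ F, eps R F v • Finsupp.single (F.erase v) (1 : R) := by
  simp [DF, Finsupp.lsum_single, LinearMap.toSpanSingleton_apply]

lemma insL_single (v : V) (F : Finset V) (c : R) :
    insL R v (Finsupp.single F c)
      = c • (if v ∈ F then 0 else eps R F v • Finsupp.single (insert v F) (1 : R)) := by
  simp [insL, Finsupp.lsum_single, LinearMap.toSpanSingleton_apply]

lemma delL_single (v : V) (F : Finset V) (c : R) :
    delL R v (Finsupp.single F c)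
      = c • (if v ∈ F then eps R F v • Finsupp.single (F.erase v) (1 : R) else 0) := by
  simp [delL, Finsupp.lsum_single, LinearMap.toSpanSingleton_apply]


lemma delL_apply (v : V) (Z : Finset V →₀ R) (G : Finset V) :
    (delL R v Z) G = if v ∈ G then 0 else eps R G v * Z (insert v G) := by
  classical
  induction Z using Finsupp.induction with
  | zero => simp
  | single_add F c Z hF hc ih =>
    rw [map_add, Finsupp.add_apply, ih, Finsupp.add_apply, delL_single]
    by_cases hvG : v ∈ G
    · rw [if_pos hvG, if_pos hvG, add_zero]
      by_cases hvF : v ∈ F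
      · rw [if_pos hvF, Finsupp.smul_apply, Finsupp.smul_apply,
          Finsupp.single_apply, if_neg (fun h : F.erase v = G => (h ▸ Finset.notMem_erase v F) hvG)]
        simp
      · simp [hvF]
    · rw [if_neg hvG, if_neg hvG, mul_add]
      congr 1
      by_cases hvF : v ∈ F
      · rw [if_pos hvF, Finsupp.smul_apply, Finsupp.smul_apply, Finsupp.single_apply,
          Finsupp.single_apply]
        by_cases hFG : F = insert v G
        · have h1 : F.erase v = G := by rw [hFG, Finset.erase_insert hvG]
          rw [if_pos h1, if_pos hFG]
          have : eps R F v = eps R G v := by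
            rw [hFG, eps_insert_self]
          rw [this, smul_eq_mul, smul_eq_mul, mul_one, mul_comm]
        · have h1 : ¬ (F.erase v = G) := fun h => hFG (by rw [← h, Finset.insert_erase hvF])
          rw [if_neg h1, if_neg hFG]
          simp
      · have h1 : ¬ (insert v G = F) := fun h => hvF (h ▸ Finset.mem_insert_self v G)
        rw [if_neg hvF, Finsupp.single_apply, if_neg (fun h => h1 h.symm)]
        simp

lemma insL_apply (v : V) (Z : Finset V →₀ R) (F : Finset V) :
    (insL R v Z) F = if v ∈ F then eps R F v * Z (F.erase v) else 0 := by
  classical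
  induction Z using Finsupp.induction with
  | zero => simp
  | single_add G c Z hG hc ih =>
    rw [map_add, Finsupp.add_apply, ih, insL_single]
    by_cases hvF : v ∈ F
    · rw [if_pos hvF, if_pos hvF, Finsupp.add_apply, mul_add]
      congr 1
      by_cases hvG : v ∈ G
      · have h1 : ¬ (G = F.erase v) := fun h => (Finset.notMem_erase v F) (h ▸ hvG)
        rw [if_pos hvG, Finsupp.single_apply, if_neg h1]
        simp
      · rw [if_neg hvG, Finsupp.smul_apply, Finsupp.smul_apply, Finsupp.single_apply,
          Finsupp.single_apply]
        by_cases hGF : insert v G = F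
        · have h2 : G = F.erase v := by rw [← hGF, Finset.erase_insert hvG]
          rw [if_pos hGF, if_pos h2]
          have : eps R G v = eps R F v := by rw [← hGF, eps_insert_self]
          rw [this, smul_eq_mul, smul_eq_mul, mul_one, mul_comm]
        · have h2 : ¬ (G = F.erase v) := fun h =>
            hGF (by rw [h, Finset.insert_erase hvF])
          rw [if_neg hGF, if_neg h2]
          simp
    · rw [if_neg hvF, if_neg hvF, add_zero]
      by_cases hvG : v ∈ G
      · simp [hvG]
      · rw [if_neg hvG, Finsupp.smul_apply, Finsupp.smul_apply, Finsupp.single_apply,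
          if_neg (fun h : insert v G = F => hvF (h ▸ Finset.mem_insert_self v G))]
        simp


lemma sign_cancel {u v : V} (hne : u ≠ v) (a b : R) :
    ((if u < v then (-1:R) else 1) * a) * b + ((if v < u then (-1:R) else 1) * b) * a = 0 := by
  rcases lt_or_gt_of_ne hne with h | h
  · rw [if_pos h, if_neg (asymm h)]; ring
  · rw [if_neg (asymm h), if_pos h]; ring

lemma delL_insL_comm {u v : V} (hne : u ≠ v) (Z : Finset V →₀ R) :
    delL R u (insL R v Z) + insL R v (delL R u Z) = 0 := by
  ext F
  rw [Finsupp.add_apply, Finsupp.coe_zero, Pi.zero_apply,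
    delL_apply u (insL R v Z) F, insL_apply v (delL R u Z) F]
  by_cases huF : u ∈ F
  · rw [if_pos huF, zero_add]
    by_cases hvF : v ∈ F
    · rw [if_pos hvF, delL_apply u Z (F.erase v), if_pos (Finset.mem_erase.2 ⟨hne, huF⟩), mul_zero]
    · rw [if_neg hvF]
  · rw [if_neg huF]
    by_cases hvF : v ∈ F
    · rw [if_pos hvF, insL_apply v Z (insert u F), if_pos (Finset.mem_insert_of_mem hvF),
        delL_apply u Z (F.erase v), if_neg (fun h => huF (Finset.mem_of_mem_erase h))]
      rw [show (insert u F).erase v = insert u (F.erase v) from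
        Finset.erase_insert_of_ne hne]
      rw [eps_insert huF v, eps_erase hvF u]
      calc _ = (((if u < v then (-1:R) else 1) * eps R F v) * eps R F u
            + ((if v < u then (-1:R) else 1) * eps R F u) * eps R F v)
              * Z (insert u (F.erase v)) := by ring
        _ = 0 := by rw [sign_cancel hne]; ring
    · rw [if_neg hvF, add_zero, insL_apply v Z (insert u F),
        if_neg (fun h => hvF (by
          rcases Finset.mem_insert.1 h with h1 | h1
          · exact absurd h1 hne.symm
          · exact h1)), mul_zero]

lemma delL_insL_self (v : V) (Z : Finset V →₀ R) :
    delL R v (insL R v Z) + insL R v (delL R v Z) = Z := by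
  ext F
  rw [Finsupp.add_apply, delL_apply v (insL R v Z) F, insL_apply v (delL R v Z) F]
  by_cases hvF : v ∈ F
  · rw [if_pos hvF, if_pos hvF, zero_add, delL_apply v Z (F.erase v),
      if_neg (Finset.notMem_erase v F),
      eps_erase_self, Finset.insert_erase hvF, ← mul_assoc, eps_sq, one_mul]
  · rw [if_neg hvF, if_neg hvF, add_zero, insL_apply v Z (insert v F),
      if_pos (Finset.mem_insert_self v F),
      eps_insert_self, Finset.erase_insert hvF, ← mul_assoc, eps_sq, one_mul]

lemma delL_delL_self (v : V) (Z : Finset V →₀ R) : delL R v (delL R v Z) = 0 := by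
  ext G
  rw [delL_apply v (delL R v Z) G, Finsupp.coe_zero, Pi.zero_apply]
  by_cases hvG : v ∈ G
  · rw [if_pos hvG]
  · rw [if_neg hvG, delL_apply v Z (insert v G), if_pos (Finset.mem_insert_self v G), mul_zero]

lemma delL_delL_comm {u v : V} (hne : u ≠ v) (Z : Finset V →₀ R) :
    delL R u (delL R v Z) + delL R v (delL R u Z) = 0 := by
  ext G
  rw [Finsupp.add_apply, Finsupp.coe_zero, Pi.zero_apply,
    delL_apply u (delL R v Z) G, delL_apply v (delL R u Z) G]
  by_cases huG : u ∈ G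
  · rw [if_pos huG, zero_add]
    by_cases hvG : v ∈ G
    · rw [if_pos hvG]
    · rw [if_neg hvG, delL_apply u Z (insert v G),
        if_pos (Finset.mem_insert_of_mem huG), mul_zero]
  · rw [if_neg huG]
    by_cases hvG : v ∈ G
    · rw [if_pos hvG, add_zero, delL_apply v Z (insert u G),
        if_pos (Finset.mem_insert_of_mem hvG), mul_zero]
    · rw [if_neg hvG, delL_apply v Z (insert u G), delL_apply u Z (insert v G),
        if_neg (show v ∉ insert u G by
          simp only [Finset.mem_insert]
          rintro (h1 | h1)
          · exact hne h1.symm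
          · exact hvG h1),
        if_neg (show u ∉ insert v G by
          simp only [Finset.mem_insert]
          rintro (h1 | h1)
          · exact hne h1
          · exact huG h1)]
      rw [eps_insert huG v, eps_insert hvG u,
        show insert v (insert u G) = insert u (insert v G) from Finset.insert_comm v u G]
      calc _ = (((if u < v then (-1:R) else 1) * eps R G v) * eps R G u
            + ((if v < u then (-1:R) else 1) * eps R G u) * eps R G v)
              * Z (insert u (insert v G)) := by ring
        _ = 0 := by rw [sign_cancel hne]; ring


lemma DF_eq_sum_delL (Z : Finset V →₀ R) :
    DF R Z = ∑ u ∈ Finset.univ, delL R u Z := by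
  induction Z using Finsupp.induction with
  | zero => simp
  | single_add F c Z hF hc ih =>
    rw [map_add, ih,
      show ∑ u ∈ Finset.univ, delL R u (Finsupp.single F c + Z)
        = ∑ u ∈ Finset.univ, (delL R u (Finsupp.single F c) + delL R u Z) from
        Finset.sum_congr rfl fun u _ => map_add _ _ _,
      Finset.sum_add_distrib]
    congr 1
    rw [DF_single,
      show ∑ u ∈ Finset.univ, delL R u (Finsupp.single F c)
        = ∑ u ∈ Finset.univ,
            c • (if u ∈ F then eps R F u • Finsupp.single (F.erase u) (1:R) else 0) from
        Finset.sum_congr rfl fun u _ => delL_single u F c,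
      ← Finset.sum_subset (Finset.subset_univ F)
        (fun u _ hu => by rw [if_neg hu, smul_zero]),
      Finset.smul_sum]
    exact Finset.sum_congr rfl fun u hu => by rw [if_pos hu]

lemma homotopy (v : V) (Z : Finset V →₀ R) :
    DF R (insL R v Z) + insL R v (DF R Z) = Z := by
  rw [DF_eq_sum_delL (insL R v Z), DF_eq_sum_delL Z, map_sum, ← Finset.sum_add_distrib,
    Finset.sum_eq_single_of_mem v (Finset.mem_univ v)
      (fun u _ hu => delL_insL_comm hu Z)]
  exact delL_insL_self v Z

lemma DF_delL_anti (v : V) (Z : Finset V →₀ R) :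
    DF R (delL R v Z) = - delL R v (DF R Z) := by
  have h : DF R (delL R v Z) + delL R v (DF R Z) = 0 := by
    rw [DF_eq_sum_delL (delL R v Z), DF_eq_sum_delL Z, map_sum, ← Finset.sum_add_distrib,
      Finset.sum_eq_single_of_mem v (Finset.mem_univ v)
        (fun u _ hu => delL_delL_comm hu Z)]
    simp [delL_delL_self]
  exact eq_neg_of_add_eq_zero_left h

lemma mem_support_insL {v : V} {Z : Finset V →₀ R} {F : Finset V}
    (h : F ∈ (insL R v Z).support) : v ∈ F ∧ F.erase v ∈ Z.support := by
  have h1 := Finsupp.mem_support_iff.1 h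
  rw [insL_apply] at h1
  by_cases hv : v ∈ F
  · refine ⟨hv, Finsupp.mem_support_iff.2 fun h2 => h1 ?_⟩
    rw [if_pos hv, h2, mul_zero]
  · exact absurd (by rw [if_neg hv]) h1

lemma mem_support_delL {v : V} {Z : Finset V →₀ R} {G : Finset V}
    (h : G ∈ (delL R v Z).support) : v ∉ G ∧ insert v G ∈ Z.support := by
  have h1 := Finsupp.mem_support_iff.1 h
  rw [delL_apply] at h1
  by_cases hv : v ∈ G
  · exact absurd (by rw [if_pos hv]) h1
  · refine ⟨hv, Finsupp.mem_support_iff.2 fun h2 => h1 ?_⟩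
    rw [if_neg hv, h2, mul_zero]

lemma Ycoef_mem (v : V) (Z : Finset V →₀ R) {F : Finset V} (hv : v ∈ F) :
    (Z - insL R v (delL R v Z)) F = 0 := by
  rw [Finsupp.sub_apply, insL_apply, if_pos hv, delL_apply,
    if_neg (Finset.notMem_erase v F), eps_erase_self, Finset.insert_erase hv,
    ← mul_assoc, eps_sq, one_mul, sub_self]

lemma Ycoef_not_mem (v : V) (Z : Finset V →₀ R) {F : Finset V} (hv : v ∉ F) :
    (Z - insL R v (delL R v Z)) F = Z F := by
  rw [Finsupp.sub_apply, insL_apply, if_neg hv, sub_zero]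


lemma eq_zero_of_DF_single {A : Finset V} {c : R} (hA : A.Nonempty)
    (h : DF R (Finsupp.single A c) = 0) : c = 0 := by
  obtain ⟨v, hv⟩ := hA
  have h2 := congrArg (fun W : Finset V →₀ R => W (A.erase v)) h
  simp only [DF_single, Finsupp.smul_apply, Finsupp.coe_zero, Pi.zero_apply] at h2
  rw [Finset.sum_apply'] at h2
  rw [Finset.sum_eq_single_of_mem v hv (fun u hu hne => by
    have hne2 : ¬ (A.erase u = A.erase v) := by
      intro he
      have : v ∈ A.erase u := Finset.mem_erase.2 ⟨fun hc => hne (hc ▸ rfl), hv⟩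
      rw [he] at this
      exact Finset.notMem_erase v A this
    rw [Finsupp.smul_apply, Finsupp.single_apply, if_neg hne2, smul_zero])] at h2
  rw [Finsupp.smul_apply, Finsupp.single_apply, if_pos rfl] at h2
  have h3 : eps R A v * (c • (eps R A v • (1:R))) = 0 := by rw [h2, mul_zero]
  rw [smul_eq_mul, smul_eq_mul, mul_one] at h3
  calc c = eps R A v * (c * eps R A v) := by
        rw [show eps R A v * (c * eps R A v) = (eps R A v * eps R A v) * c by ring,
          eps_sq, one_mul]
    _ = 0 := h3


theorem freeP : ∀ (n : ℕ) (𝔉 : Set (Finset V))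
    (_ : ∀ ⦃F G : Finset V⦄, F ∈ 𝔉 → G ⊆ F → G ∈ 𝔉)
    (_ : ∀ W : Finset V, (∀ u ∈ W, ∀ w ∈ W, u ≠ w → ({u, w} : Finset V) ∈ 𝔉) →
      (∃ u ∈ W, W.erase u ∈ 𝔉) → n + 2 ≤ W.card → W ∈ 𝔉)
    (Z : Finset V →₀ R)
    (_ : ∀ F ∈ Z.support, F ∈ 𝔉 ∧ F.card = n + 1)
    (_ : DF R Z = 0)
    (_ : (Z.support.sup id).card ≤ 2 * n + 1),
    ∃ B : Finset V →₀ R,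
      (∀ F ∈ B.support, F ∈ 𝔉 ∧ F.card = n + 2 ∧ F ⊆ Z.support.sup id) ∧ DF R B = Z := by
  intro n
  induction n using Nat.strong_induction_on with
  | _ n ihn =>
  intro 𝔉 hdc hQ
  suffices hsuff : ∀ (t : ℕ) (Z : Finset V →₀ R),
      (∀ F ∈ Z.support, F ∈ 𝔉 ∧ F.card = n + 1) → DF R Z = 0 →
      (Z.support.sup id).card ≤ 2 * n + 1 → (Z.support.sup id).card ≤ t →
      ∃ B : Finset V →₀ R,
        (∀ F ∈ B.support, F ∈ 𝔉 ∧ F.card = n + 2 ∧ F ⊆ Z.support.sup id) ∧ DF R B = Z by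
    intro Z hsupp hcyc hsmall
    exact hsuff _ Z hsupp hcyc hsmall le_rfl
  intro t
  induction t with
  | zero =>
    intro Z hsupp hcyc hsmall ht
    have hZ0 : Z = 0 := by
      by_contra hne
      obtain ⟨F, hF⟩ := Finsupp.support_nonempty_iff.2 hne
      have hcard := (hsupp F hF).2
      have hsub : F ⊆ Z.support.sup id := Finset.le_sup (f := id) hF
      have : F.card ≤ 0 := le_trans (Finset.card_le_card hsub) ht
      omega
    exact ⟨0, by simp, by rw [map_zero, hZ0]⟩
  | succ t iht =>
    intro Z hsupp hcyc hsmall ht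
    by_cases hZ0 : Z = 0
    · exact ⟨0, by simp, by rw [map_zero, hZ0]⟩
    have hTmem : ∀ F ∈ Z.support, F ⊆ Z.support.sup id := fun F hF => Finset.le_sup (f := id) hF
    set T' := Z.support.sup id with hT'
    have hT'mem : ∀ v ∈ T', ∃ F ∈ Z.support, v ∈ F := by
      intro v hv
      exact Finset.mem_sup.1 hv
    by_cases hpair : ∀ v ∈ T', ∀ w ∈ T', v ≠ w → ∃ F ∈ Z.support, v ∈ F ∧ w ∈ F
    · -- case (ii)
      obtain ⟨F₀, hF₀⟩ := Finsupp.support_nonempty_iff.2 hZ0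
      have hF₀T : F₀ ⊆ T' := hTmem F₀ hF₀
      have hF₀c : F₀.card = n + 1 := (hsupp F₀ hF₀).2
      have hF₀face : F₀ ∈ 𝔉 := (hsupp F₀ hF₀).1
      have hedge : ∀ v ∈ T', ∀ w ∈ T', v ≠ w → ({v, w} : Finset V) ∈ 𝔉 := by
        intro v hv w hw hne
        obtain ⟨F, hF, hvF, hwF⟩ := hpair v hv w hw hne
        exact hdc (hsupp F hF).1
          (Finset.insert_subset hvF (Finset.singleton_subset_iff.2 hwF))
      by_cases hbig : n + 2 ≤ T'.card
      · have claim : ∀ k (A : Finset V), F₀ ⊆ A → A ⊆ T' → A.card = n + 1 + k → A ∈ 𝔉 := by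
          intro k
          induction k with
          | zero =>
            intro A h1 h2 h3
            have : F₀ = A := Finset.eq_of_subset_of_card_le h1 (by omega)
            rw [← this]; exact hF₀face
          | succ k ihk =>
            intro A h1 h2 h3
            obtain ⟨u, huA, huF₀⟩ : ∃ u ∈ A, u ∉ F₀ := by
              by_contra hcon
              push_neg at hcon
              have : A ⊆ F₀ := hcon
              have := Finset.card_le_card this
              omega
            have hAe : A.erase u ∈ 𝔉 := ihk (A.erase u)
              (Finset.subset_erase.2 ⟨h1, huF₀⟩)
              (le_trans (Finset.erase_subset u A) h2)
              (by rw [Finset.card_erase_of_mem huA]; omega)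
            exact hQ A (fun x hx y hy hxy => hedge x (h2 hx) y (h2 hy) hxy)
              ⟨u, huA, hAe⟩ (by omega)
        have hTface : T' ∈ 𝔉 :=
          claim (T'.card - (n+1)) T' hF₀T (Finset.Subset.refl T')
            (by omega)
        obtain ⟨v, hvF₀⟩ : F₀.Nonempty := Finset.card_pos.1 (by omega)
        have hvT : v ∈ T' := hF₀T hvF₀
        refine ⟨insL R v Z, ?_, ?_⟩
        · intro F hFs
          obtain ⟨hvF, hres⟩ := mem_support_insL hFs
          have hsub : F ⊆ T' := by
            intro x hx
            by_cases hxv : x = v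
            · rw [hxv]; exact hvT
            · exact hTmem _ hres (Finset.mem_erase.2 ⟨hxv, hx⟩)
          refine ⟨hdc hTface hsub, ?_, hsub⟩
          rw [← Finset.insert_erase hvF,
            Finset.card_insert_of_notMem (Finset.notMem_erase v F), (hsupp _ hres).2]
        · have hh := homotopy v Z
          rw [hcyc, map_zero, add_zero] at hh
          exact hh
      · -- small case : T' = F₀, single facet, Z must vanish
        exfalso
        have hsing : Z.support ⊆ {T'} := by
          intro F hF
          have h1 : F ⊆ T' := hTmem F hF
          have : F = T' := Finset.eq_of_subset_of_card_le h1 (by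
            have := (hsupp F hF).2; omega)
          simp [this]
        have hZsing : Z = Finsupp.single T' (Z T') := Finsupp.support_subset_singleton.1 hsing
        have hT'ne : T'.Nonempty := by
          refine Finset.card_pos.1 ?_
          have := Finset.card_le_card hF₀T
          omega
        have : Z T' = 0 := eq_zero_of_DF_single hT'ne (by rw [← hZsing]; exact hcyc)
        rw [this] at hZsing
        exact hZ0 (by rw [hZsing, Finsupp.single_zero])
    · -- case (i)
      push_neg at hpair
      obtain ⟨v, hvT, w, hwT, hvw, hnopair⟩ := hpair
      obtain ⟨m, rfl⟩ : ∃ m, n = m + 1 := by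
        refine ⟨n - 1, ?_⟩
        have h2 : 2 ≤ T'.card := Finset.one_lt_card.2 ⟨v, hvT, w, hwT, hvw⟩
        omega
      set L : Set (Finset V) := {G | v ∉ G ∧ insert v G ∈ 𝔉} with hL
      have hLdc : ∀ ⦃F G : Finset V⦄, F ∈ L → G ⊆ F → G ∈ L := by
        intro F G hF hGF
        exact ⟨fun hc => hF.1 (hGF hc), hdc hF.2 (Finset.insert_subset_insert v hGF)⟩
      have hLQ : ∀ W : Finset V, (∀ u ∈ W, ∀ u' ∈ W, u ≠ u' → ({u, u'} : Finset V) ∈ L) →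
          (∃ u ∈ W, W.erase u ∈ L) → m + 2 ≤ W.card → W ∈ L := by
        intro W hWpairs hWcrit hWcard
        have hcard2 : 1 < W.card := by omega
        have hvW : v ∉ W := by
          intro hvW
          obtain ⟨u', hu'W, hu'v⟩ := Finset.exists_mem_ne hcard2 v
          have := (hWpairs v hvW u' hu'W (Ne.symm hu'v)).1
          exact this (Finset.mem_insert_self v _)
        have hWv : insert v W ∈ 𝔉 := by
          apply hQ
          · intro x hx y hy hxy
            rcases Finset.mem_insert.1 hx with hx1 | hx1
            · rcases Finset.mem_insert.1 hy with hy1 | hy1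
              · exact absurd (hx1.trans hy1.symm) hxy
              · subst hx1
                obtain ⟨u'', hu''W, hu''y⟩ := Finset.exists_mem_ne hcard2 y
                have h3 := (hWpairs y hy1 u'' hu''W (Ne.symm hu''y)).2
                exact hdc h3 (by
                  intro z hz
                  rcases Finset.mem_insert.1 hz with hz1 | hz1
                  · rw [hz1]; exact Finset.mem_insert_self _ _
                  · rw [Finset.mem_singleton.1 hz1]
                    exact Finset.mem_insert_of_mem (Finset.mem_insert_self _ _))
            · rcases Finset.mem_insert.1 hy with hy1 | hy1
              · subst hy1
                obtain ⟨u'', hu''W, hu''x⟩ := Finset.exists_mem_ne hcard2 x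
                have h3 := (hWpairs x hx1 u'' hu''W (Ne.symm hu''x)).2
                rw [Finset.pair_comm]
                exact hdc h3 (by
                  intro z hz
                  rcases Finset.mem_insert.1 hz with hz1 | hz1
                  · rw [hz1]; exact Finset.mem_insert_self _ _
                  · rw [Finset.mem_singleton.1 hz1]
                    exact Finset.mem_insert_of_mem (Finset.mem_insert_self _ _))
              · have h3 := (hWpairs x hx1 y hy1 hxy).2
                exact hdc h3 (by
                  intro z hz
                  exact Finset.mem_insert_of_mem hz)
          · obtain ⟨u, huW, hue⟩ := hWcrit
            refine ⟨u, Finset.mem_insert_of_mem huW, ?_⟩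
            have huv : v ≠ u := fun hc => hvW (hc ▸ huW)
            rw [Finset.erase_insert_of_ne huv]
            exact hue.2
          · rw [Finset.card_insert_of_notMem hvW]; omega
        exact ⟨hvW, hWv⟩
      set X := delL R v Z with hX
      have hXsupp : ∀ G ∈ X.support, G ∈ L ∧ G.card = m + 1 := by
        intro G hG
        obtain ⟨hvG, hins⟩ := mem_support_delL hG
        refine ⟨⟨hvG, (hsupp _ hins).1⟩, ?_⟩
        have := (hsupp _ hins).2
        rw [Finset.card_insert_of_notMem hvG] at this
        omega
      have hXcyc : DF R X = 0 := by
        rw [hX, DF_delL_anti, hcyc, map_zero, neg_zero]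
      have hXsub : X.support.sup id ⊆ (T'.erase v).erase w := by
        intro x hx
        obtain ⟨G, hG, hxG⟩ := Finset.mem_sup.1 hx
        obtain ⟨hvG, hins⟩ := mem_support_delL hG
        have hGT : G ⊆ T' := fun x hx => (hTmem _ hins) (Finset.mem_insert_of_mem hx)
        have hwG : w ∉ G := fun hwG =>
          hnopair _ hins (Finset.mem_insert_self v G) (Finset.mem_insert_of_mem hwG)
        exact Finset.mem_erase.2 ⟨fun hc => hwG (hc ▸ hxG),
          Finset.mem_erase.2 ⟨fun hc => hvG (hc ▸ hxG), hGT hxG⟩⟩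
      have hwT'v : w ∈ T'.erase v := Finset.mem_erase.2 ⟨hvw.symm, hwT⟩
      have hXsmall : (X.support.sup id).card ≤ 2 * m + 1 := by
        have h1 := Finset.card_le_card hXsub
        rw [Finset.card_erase_of_mem hwT'v, Finset.card_erase_of_mem hvT] at h1
        omega
      obtain ⟨B₁, hB₁p, hB₁d⟩ := ihn m (by omega) L hLdc hLQ X hXsupp hXcyc hXsmall
      set Z'' := Z - insL R v X + B₁ with hZ''
      have hYsupp : ∀ F ∈ (Z - insL R v X).support, F ∈ Z.support ∧ v ∉ F := by
        intro F hF
        have hne := Finsupp.mem_support_iff.1 hF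
        by_cases hvF : v ∈ F
        · exact absurd (Ycoef_mem v Z hvF) hne
        · rw [Ycoef_not_mem v Z hvF] at hne
          exact ⟨Finsupp.mem_support_iff.2 hne, hvF⟩
      have hZ''supp : ∀ F ∈ Z''.support, F ∈ 𝔉 ∧ F.card = (m + 1) + 1 := by
        intro F hF
        rcases Finset.mem_union.1 (Finsupp.support_add hF) with h1 | h1
        · obtain ⟨h2, _⟩ := hYsupp F h1
          exact hsupp F h2
        · obtain ⟨⟨hvF, hins⟩, hc, _⟩ := hB₁p F h1
          exact ⟨hdc hins (Finset.subset_insert v F), by omega⟩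
      have hZ''cyc : DF R Z'' = 0 := by
        have h1 : DF R (insL R v X) = X := by
          have hh := homotopy v X
          rw [hXcyc, map_zero, add_zero] at hh
          exact hh
        rw [hZ'', map_add, map_sub, hcyc, h1, hB₁d]
        abel
      have hZ''sub : Z''.support.sup id ⊆ T'.erase v := by
        intro x hx
        obtain ⟨F, hF, hxF⟩ := Finset.mem_sup.1 hx
        rcases Finset.mem_union.1 (Finsupp.support_add hF) with h1 | h1
        · obtain ⟨h2, h3⟩ := hYsupp F h1
          exact Finset.mem_erase.2 ⟨fun hc => h3 (hc ▸ hxF), hTmem F h2 hxF⟩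
        · have h4 : F ⊆ X.support.sup id := (hB₁p F h1).2.2
          exact Finset.mem_of_mem_erase (hXsub (h4 hxF))
      have hT'c : 1 ≤ T'.card := by
        have := Finset.card_le_card (Finset.singleton_subset_iff.2 hvT)
        simpa using this
      have hZ''small : (Z''.support.sup id).card ≤ 2 * (m + 1) + 1 := by
        have h1 := Finset.card_le_card hZ''sub
        rw [Finset.card_erase_of_mem hvT] at h1
        omega
      have hZ''t : (Z''.support.sup id).card ≤ t := by
        have h1 := Finset.card_le_card hZ''sub
        rw [Finset.card_erase_of_mem hvT] at h1
        omega
      obtain ⟨B₂, hB₂p, hB₂d⟩ := iht Z'' hZ''supp hZ''cyc hZ''small hZ''t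
      refine ⟨B₂ - insL R v B₁, ?_, ?_⟩
      · intro F hF
        rcases Finset.mem_union.1 (Finsupp.support_sub hF) with h1 | h1
        · obtain ⟨ha, hb, hc⟩ := hB₂p F h1
          refine ⟨ha, hb, ?_⟩
          intro x hx
          exact Finset.mem_of_mem_erase (hZ''sub (hc hx))
        · obtain ⟨hvF, hres⟩ := mem_support_insL h1
          obtain ⟨⟨hvG, hins⟩, hcG, hsubG⟩ := hB₁p _ hres
          rw [Finset.insert_erase hvF] at hins
          refine ⟨hins, ?_, ?_⟩
          · rw [← Finset.insert_erase hvF,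
              Finset.card_insert_of_notMem (Finset.notMem_erase v F)]
            omega
          · intro x hx
            by_cases hxv : x = v
            · rw [hxv]; exact hvT
            · have h5 := hXsub (hsubG (Finset.mem_erase.2 ⟨hxv, hx⟩))
              exact Finset.mem_of_mem_erase (Finset.mem_of_mem_erase h5)
      · have h1 : DF R (insL R v B₁) = B₁ - insL R v X := by
          have hh := homotopy v B₁
          rw [hB₁d] at hh
          exact eq_sub_of_add_eq hh
        rw [map_sub, hB₂d, h1, hZ'']
        abel


end BannerAux


namespace BannerAux
variable {R : Type} [CommRing R] {V : Type} [Fintype V] [LinearOrder V]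

lemma phi_bdry (K : SComplex V) (j : ℕ) :
    (Finsupp.lmapDomain R R (fun s : K.simplex j => s.1)).comp (K.bdry R j)
      = (DF R).comp
          (Finsupp.lmapDomain R R (fun s : K.simplex (j+1) => s.1)) := by
  apply Finsupp.lhom_ext
  intro s b
  simp only [LinearMap.comp_apply]
  rw [SComplex.bdry]
  erw [Finsupp.lsum_single]
  rw [LinearMap.toSpanSingleton_apply]
  simp only [map_smul, map_sum, Finsupp.lmapDomain_apply, Finsupp.mapDomain_single, DF_single]
  have hR : (Finsupp.lmapDomain R R (fun s : K.simplex (j+1) => s.1))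
      (Finsupp.single s b) = Finsupp.single s.1 b := by
    erw [Finsupp.lmapDomain_apply, Finsupp.mapDomain_single]
  erw [Finsupp.mapDomain_finset_sum]
  congr 1
  rw [← Finset.sum_attach s.1 (fun v => eps R s.1 v • Finsupp.single (s.1.erase v) (1:R))]
  refine Finset.sum_congr rfl fun v _ => ?_
  erw [Finsupp.mapDomain_smul, Finsupp.mapDomain_single]
  rfl

end BannerAux

/-- Let `Δ` be a banner `(d-1)`-dimensional simplicial complex with `d ≥ 3`.
Then every induced subcomplex `Γ` of `Δ` with `H̃_{d-2}(Γ) ≠ 0` has at least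
`2d - 2` vertices. -/
theorem stmt13 (k : Type) [Field k] {V : Type} [Fintype V] [LinearOrder V]
    (K : SComplex V) (d : ℕ) (hd : 3 ≤ d) (hdim : K.dimP1 = d)
    (hbanner : K.IsBanner) (S : Finset V)
    (hhom : Nontrivial (SComplex.Hred k (K.induced S) (d - 2))) :
    2 * d - 2 ≤ (K.induced S).vertexSet.ncard := by
  classical
  obtain ⟨n, hdn⟩ : ∃ n, d = n + 2 := ⟨d - 2, by omega⟩
  have hd2 : d - 2 = n := by omega
  rw [hd2] at hhom
  obtain ⟨x, hx0⟩ := exists_ne (0 : SComplex.Hred k (K.induced S) n)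
  obtain ⟨z, hzcyc, hzeq⟩ := Submodule.mem_map.1 x.2
  have hznb : z ∉ SComplex.bdries k (K.induced S) n := by
    intro hzb
    apply hx0
    apply Subtype.ext
    rw [← hzeq, Submodule.mkQ_apply]
    exact (Submodule.Quotient.mk_eq_zero _).2 hzb
  have hzbd : (K.induced S).bdry k n z = 0 := LinearMap.mem_ker.1 hzcyc
  set Zf := Finsupp.lmapDomain k k
    (fun s : (K.induced S).simplex (n+1) => s.1) z with hZf
  have hZfcyc : BannerAux.DF k Zf = 0 := by
    have h1 := LinearMap.congr_fun (BannerAux.phi_bdry (R := k) (K.induced S) n) z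
    simp only [LinearMap.comp_apply] at h1
    calc BannerAux.DF k Zf
        = Finsupp.lmapDomain k k
            (fun s : (K.induced S).simplex n => s.1)
            ((K.induced S).bdry k n z) := h1.symm
      _ = 0 := by rw [hzbd, map_zero]
  have hsuppZ : ∀ F ∈ Zf.support, F ∈ (K.induced S).faces ∧ F.card = n + 1 := by
    intro F hF
    have hsub : Zf.support ⊆ z.support.image Subtype.val := Finsupp.mapDomain_support
    obtain ⟨s, _, rfl⟩ := Finset.mem_image.1 (hsub hF)
    exact s.2
  have hQ : ∀ W : Finset V,
      (∀ u ∈ W, ∀ w ∈ W, u ≠ w → ({u, w} : Finset V) ∈ (K.induced S).faces) →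
      (∃ u ∈ W, W.erase u ∈ (K.induced S).faces) → n + 2 ≤ W.card →
      W ∈ (K.induced S).faces := by
    intro W hWp hWc hWcard
    have hWK : W ∈ K.faces := by
      apply hbanner W
      · intro u hu v hv huv
        exact (hWp u hu v hv huv).1
      · obtain ⟨u, hu, he⟩ := hWc
        exact ⟨u, hu, he.1⟩
      · rw [hdim]; omega
    have hWS : W ⊆ S := by
      intro u hu
      obtain ⟨u', hu', hne⟩ := Finset.exists_mem_ne (by omega : 1 < W.card) u
      have h3 := (hWp u hu u' hu' (Ne.symm hne)).2
      exact h3 (Finset.mem_insert_self u _)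
    exact ⟨hWK, hWS⟩
  by_cases hsmall : (Zf.support.sup id).card ≤ 2 * n + 1
  · exfalso
    apply hznb
    obtain ⟨B, hBp, hBd⟩ := BannerAux.freeP n (K.induced S).faces
      (fun F G hF hG => (K.induced S).down_closed hF hG) hQ Zf hsuppZ hZfcyc hsmall
    set b : (K.induced S).chains k (n+1+1) := ∑ F ∈ B.support.attach,
      B F.1 • Finsupp.single
        (⟨F.1, (hBp F.1 F.2).1, (hBp F.1 F.2).2.1⟩ : (K.induced S).simplex (n+2)) (1:k)
      with hb
    have hφb : Finsupp.lmapDomain k k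
        (fun s : (K.induced S).simplex (n+2) => s.1) b = B := by
      erw [hb, map_sum]
      calc ∑ F ∈ B.support.attach,
            (Finsupp.lmapDomain k k
              (fun s : (K.induced S).simplex (n+2) => s.1))
              (B F.1 • Finsupp.single
                (⟨F.1, (hBp F.1 F.2).1, (hBp F.1 F.2).2.1⟩ :
                  (K.induced S).simplex (n+2)) (1:k))
          = ∑ F ∈ B.support.attach, Finsupp.single F.1 (B F.1) := by
            refine Finset.sum_congr rfl fun F _ => ?_
            erw [map_smul]
            erw [Finsupp.lmapDomain_apply, Finsupp.mapDomain_single]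
            rw [Finsupp.smul_single, smul_eq_mul, mul_one]
        _ = ∑ F ∈ B.support, Finsupp.single F (B F) :=
            Finset.sum_attach B.support (fun F => Finsupp.single F (B F))
        _ = B := by
            conv_rhs => rw [← Finsupp.sum_single B]
            rfl
    have h2 : Finsupp.lmapDomain k k
        (fun s : (K.induced S).simplex (n+1) => s.1)
          ((K.induced S).bdry k (n+1) b) = Zf := by
      have h3 := LinearMap.congr_fun (BannerAux.phi_bdry (R := k) (K.induced S) (n+1)) b
      simp only [LinearMap.comp_apply] at h3
      calc Finsupp.lmapDomain k k
            (fun s : (K.induced S).simplex (n+1) => s.1)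
            ((K.induced S).bdry k (n+1) b)
          = BannerAux.DF k (Finsupp.lmapDomain k k
              (fun s : (K.induced S).simplex (n+2) => s.1) b) := h3
        _ = BannerAux.DF k B := by rw [hφb]
        _ = Zf := hBd
    have hinj : Function.Injective
        (Finsupp.mapDomain (f := (Subtype.val : (K.induced S).simplex (n+1) → Finset V))
          (M := k)) :=
      Finsupp.mapDomain_injective Subtype.val_injective
    exact ⟨b, hinj h2⟩
  · push_neg at hsmall
    have hsub : ((Zf.support.sup id : Finset V) : Set V) ⊆ (K.induced S).vertexSet := by
      intro y hy
      obtain ⟨F, hF, hyF⟩ := Finset.mem_sup.1 (Finset.mem_coe.1 hy)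
      exact (K.induced S).down_closed (hsuppZ F hF).1 (Finset.singleton_subset_iff.2 hyF)
    calc 2 * d - 2 ≤ (Zf.support.sup id).card := by omega
      _ = ((Zf.support.sup id : Finset V) : Set V).ncard := (Set.ncard_coe_finset _).symm
      _ ≤ (K.induced S).vertexSet.ncard := Set.ncard_le_ncard hsub (Set.toFinite _)
end

section
/- Let Δ be a flag (d-1)-dimensional minimal cycle (e.g., a flag triangulation of a closed connected (d-1)-manifold, or a flag (d-1)-pseudomanifold). Then the 1-skeleton of Δ is (2d-2)-connected. -/
open Finset

namespace SComplex

variable {V : Type} [Fintype V] [LinearOrder V]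

noncomputable instance (K : SComplex V) (j : ℕ) : Fintype (K.simplex j) := by
  classical exact Subtype.fintype _

variable {R : Type} [CommRing R]

attribute [local instance 10] Classical.propDecidable
set_option linter.unusedSectionVars false

def sgn (R : Type) [CommRing R] (A : Finset V) (x : V) : R :=
  (-1) ^ ((A.filter (· < x)).card)

lemma sgn_mul_self (A : Finset V) (x : V) : sgn R A x * sgn R A x = 1 := by
  rw [sgn, ← pow_add]
  exact Even.neg_one_pow ⟨_, rfl⟩

lemma sgn_insert (A : Finset V) {y : V} (hy : y ∉ A) (x : V) :
    sgn R (insert y A) x = (if y < x then -1 else 1) * sgn R A x := by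
  rw [sgn, sgn, filter_insert]
  split_ifs with h
  · rw [card_insert_of_notMem (by simp [hy]), pow_succ]
    ring
  · rw [one_mul]

lemma sgn_swap {ρ : Finset V} {v x : V} (hv : v ∉ ρ) (hx : x ∉ ρ) (hxv : x ≠ v) :
    sgn R (insert v ρ) x * sgn R (insert x ρ) v = -(sgn R ρ v * sgn R ρ x) := by
  rw [sgn_insert _ hv, sgn_insert _ hx]
  rcases hxv.lt_or_gt with h | h
  · simp [h, h.not_gt]; ring
  · simp [h, h.not_gt]; ring

lemma sgn_erase (A : Finset V) (x : V) : sgn R (A.erase x) x = sgn R A x := by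
  rw [sgn, sgn]
  congr 1
  rw [filter_erase]
  simp

/-- make the simplex `insert x τ`. -/
def ins {K : SComplex V} {j : ℕ} (τ : K.simplex j) (x : V)
    (h : x ∉ τ.1 ∧ insert x τ.1 ∈ K.faces) : K.simplex (j+1) :=
  ⟨insert x τ.1, h.2, by rw [card_insert_of_notMem h.1, τ.2.2]⟩

lemma bdry_single (K : SComplex V) (j : ℕ) (s : K.simplex (j+1)) (r : R) (τ : K.simplex j) :
    K.bdry R j (Finsupp.single s r) τ = ∑ x : V, if h : x ∉ τ.1 ∧ insert x τ.1 ∈ K.faces then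
      sgn R τ.1 x * (Finsupp.single s r) (ins τ x h) else 0 := by
  classical
  rw [bdry, Finsupp.lsum_single, LinearMap.toSpanSingleton_apply, Finsupp.smul_apply]
  erw [Finset.sum_apply']
  conv_lhs => arg 2; arg 2; ext v; erw [Finsupp.smul_apply, Finsupp.single_apply]
  simp only [Finsupp.smul_apply, Finsupp.single_apply, smul_eq_mul, mul_ite, mul_one, mul_zero]
  by_cases hsub : τ.1 ⊆ s.1
  · have hcard : (s.1 \ τ.1).card = 1 := by
      rw [card_sdiff_of_subset hsub, s.2.2, τ.2.2]; omega
    obtain ⟨x₀, hx₀⟩ := card_eq_one.mp hcard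
    have hx₀s : x₀ ∈ s.1 ∧ x₀ ∉ τ.1 := by
      have : x₀ ∈ s.1 \ τ.1 := hx₀ ▸ mem_singleton_self x₀
      exact ⟨(mem_sdiff.mp this).1, (mem_sdiff.mp this).2⟩
    have herase : τ.1 = s.1.erase x₀ := by
      refine Finset.eq_of_subset_of_card_le (fun t ht => Finset.mem_erase.mpr
        ⟨fun h => hx₀s.2 (h ▸ ht), hsub ht⟩) ?_
      rw [Finset.card_erase_of_mem hx₀s.1, s.2.2, τ.2.2]
      omega
    have hins : insert x₀ τ.1 = s.1 := by
      rw [herase, Finset.insert_erase hx₀s.1]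
    have hcond : x₀ ∉ τ.1 ∧ insert x₀ τ.1 ∈ K.faces := ⟨hx₀s.2, hins ▸ s.2.1⟩
    rw [Finset.sum_eq_single_of_mem (⟨x₀, hx₀s.1⟩ : {x // x ∈ s.1}) (Finset.mem_attach _ _)
      (fun v _ hv => ?_), Finset.sum_eq_single_of_mem x₀ (Finset.mem_univ x₀)
      (fun x _ hx => ?_)]
    · rw [dif_pos hcond, if_pos, if_pos]
      · have hsgn : sgn R τ.1 x₀ = (-1 : R) ^ ((s.1.filter (· < x₀)).card) := by
          rw [herase]; exact sgn_erase _ _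
        rw [hsgn]; ring
      · exact Subtype.ext hins.symm
      · exact Subtype.ext herase.symm
    · -- other x of RHS vanish
      split_ifs with h h2
      · exfalso
        apply hx
        have hval : s.1 = insert x τ.1 := congrArg Subtype.val h2
        have hxs : x ∈ s.1 := hval ▸ mem_insert_self x τ.1
        have : x ∈ s.1 \ τ.1 := mem_sdiff.mpr ⟨hxs, h.1⟩
        rw [hx₀] at this
        exact mem_singleton.mp this
      · rfl
      · rfl
    · -- other v of LHS vanish
      rw [if_neg]
      intro hEq
      have hval : s.1.erase v.1 = τ.1 := congrArg Subtype.val hEq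
      apply hv
      have hvx : v.1 = x₀ := by
        by_contra hne
        have : x₀ ∈ s.1.erase v.1 := Finset.mem_erase.mpr ⟨fun h => hne h.symm, hx₀s.1⟩
        rw [hval] at this
        exact hx₀s.2 this
      exact Subtype.ext hvx
  · -- τ not a subset: both sides zero
    have h2 : ∀ x ∈ (univ : Finset V), (if h : x ∉ τ.1 ∧ insert x τ.1 ∈ K.faces then
        (if s = ins τ x h then sgn R τ.1 x * r else 0) else 0) = 0 := by
      intro x _
      split_ifs with h h2
      · exfalso
        have hval : s.1 = insert x τ.1 := congrArg Subtype.val h2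
        exact hsub (fun t ht => hval ▸ mem_insert_of_mem ht)
      · rfl
      · rfl
    simp only [Finset.sum_eq_zero h2]
    refine mul_eq_zero_of_right r (Finset.sum_eq_zero fun v hv => ?_)
    rw [if_neg]
    intro hEq
    have hval : s.1.erase v.1 = τ.1 := congrArg Subtype.val hEq
    exact hsub (hval ▸ fun t ht => Finset.mem_of_mem_erase ht)

lemma bdry_apply (K : SComplex V) (j : ℕ) (z : K.chains R (j+1)) (τ : K.simplex j) :
    K.bdry R j z τ = ∑ x : V, if h : x ∉ τ.1 ∧ insert x τ.1 ∈ K.faces then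
      sgn R τ.1 x * z (ins τ x h) else 0 := by
  classical
  induction z using Finsupp.induction_linear with
  | zero => simp
  | add f g hf hg =>
      rw [map_add, Finsupp.add_apply, hf, hg, ← Finset.sum_add_distrib]
      refine Finset.sum_congr rfl fun x _ => ?_
      split_ifs with h
      · rw [Finsupp.add_apply]; ring
      · rw [add_zero]
  | single s r => exact bdry_single K j s r τ


/-- support of a chain contained in faces inside `W` -/
def suppIn {K : SComplex V} {j : ℕ} (z : K.chains R j) (W : Finset V) : Prop :=
  ∀ s, z s ≠ 0 → s.1 ⊆ W

lemma suppIn_bdry {K : SComplex V} {j : ℕ} {z : K.chains R (j+1)} {W : Finset V}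
    (h : suppIn z W) : suppIn (K.bdry R j z) W := by
  intro τ hne
  rw [bdry_apply] at hne
  obtain ⟨x, -, hx⟩ := Finset.exists_ne_zero_of_sum_ne_zero hne
  by_cases h' : x ∉ τ.1 ∧ insert x τ.1 ∈ K.faces
  · rw [dif_pos h'] at hx
    have hz : z (ins τ x h') ≠ 0 := fun h0 => hx (by rw [h0, mul_zero])
    exact fun t ht => h _ hz (Finset.mem_insert_of_mem ht)
  · rw [dif_neg h'] at hx
    exact absurd rfl hx

lemma bdry_bdry (K : SComplex V) (j : ℕ) (u : K.chains R (j+2)) :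
    K.bdry R j (K.bdry R (j+1) u) = 0 := by
  classical
  ext τ
  rw [bdry_apply, Finsupp.coe_zero, Pi.zero_apply]
  trans (∑ x : V, ∑ y : V, if h : x ∉ τ.1 ∧ y ∉ insert x τ.1 ∧ insert y (insert x τ.1) ∈ K.faces
    then sgn R τ.1 x * sgn R (insert x τ.1) y *
      u (ins (ins τ x ⟨h.1, K.down_closed h.2.2 (Finset.subset_insert _ _)⟩) y ⟨h.2.1, h.2.2⟩)
    else 0)
  · refine Finset.sum_congr rfl fun x _ => ?_
    by_cases hx : x ∉ τ.1 ∧ insert x τ.1 ∈ K.faces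
    · rw [dif_pos hx, bdry_apply, Finset.mul_sum]
      refine Finset.sum_congr rfl fun y _ => ?_
      by_cases hy : y ∉ (ins τ x hx).1 ∧ insert y (ins τ x hx).1 ∈ K.faces
      · rw [dif_pos hy, dif_pos (⟨hx.1, hy.1, hy.2⟩ :
          x ∉ τ.1 ∧ y ∉ insert x τ.1 ∧ insert y (insert x τ.1) ∈ K.faces), mul_assoc]
        rfl
      · rw [dif_neg hy, dif_neg (fun hc => hy ⟨hc.2.1, hc.2.2⟩), mul_zero]
    · rw [dif_neg hx]
      refine (Finset.sum_eq_zero fun y _ => ?_).symm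
      exact dif_neg fun hc => hx ⟨hc.1, K.down_closed hc.2.2 (Finset.subset_insert _ _)⟩
  · rw [← Finset.sum_product']
    refine Finset.sum_involution (fun p _ => (p.2, p.1)) ?_ ?_
      (fun p _ => Finset.mem_product.mpr ⟨Finset.mem_univ _, Finset.mem_univ _⟩)
      (fun p _ => rfl)
    · intro p hp
      by_cases hc : p.1 ∉ τ.1 ∧ p.2 ∉ insert p.1 τ.1 ∧ insert p.2 (insert p.1 τ.1) ∈ K.faces
      · have hyτ : p.2 ∉ τ.1 := fun ht => hc.2.1 (Finset.mem_insert_of_mem ht)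
        have hne : p.2 ≠ p.1 := fun h => hc.2.1 (h ▸ Finset.mem_insert_self _ _)
        have hcomm : insert p.1 (insert p.2 τ.1) = insert p.2 (insert p.1 τ.1) :=
          Finset.insert_comm _ _ _
        have hc' : p.2 ∉ τ.1 ∧ p.1 ∉ insert p.2 τ.1 ∧ insert p.1 (insert p.2 τ.1) ∈ K.faces := by
          refine ⟨hyτ, fun hm => ?_, hcomm ▸ hc.2.2⟩
          rcases Finset.mem_insert.mp hm with h | h
          · exact hne h.symm
          · exact hc.1 h
        rw [dif_pos hc, dif_pos hc']
        have huu : u (ins (ins τ p.1 ⟨hc.1, K.down_closed hc.2.2 (Finset.subset_insert _ _)⟩)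
            p.2 ⟨hc.2.1, hc.2.2⟩) =
            u (ins (ins τ p.2 ⟨hc'.1, K.down_closed hc'.2.2 (Finset.subset_insert _ _)⟩)
            p.1 ⟨hc'.2.1, hc'.2.2⟩) := by
          congr 1
          exact Subtype.ext hcomm.symm
        rw [huu, sgn_insert _ hc.1, sgn_insert _ hyτ]
        rcases hne.lt_or_gt with h | h
        · rw [if_neg (asymm h), if_pos h]; ring
        · rw [if_pos h, if_neg (asymm h)]; ring
      · have hc' : ¬(p.2 ∉ τ.1 ∧ p.1 ∉ insert p.2 τ.1 ∧ insert p.1 (insert p.2 τ.1) ∈ K.faces) := by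
          intro hc'
          have hne : p.1 ≠ p.2 := fun h => hc'.2.1 (h ▸ Finset.mem_insert_self _ _)
          refine hc ⟨fun ht => hc'.2.1 (Finset.mem_insert_of_mem ht), fun hm => ?_,
            by rw [Finset.insert_comm]; exact hc'.2.2⟩
          rcases Finset.mem_insert.mp hm with h | h
          · exact hne h.symm
          · exact hc'.1 h
        rw [dif_neg hc, dif_neg hc', add_zero]
    · intro p hp hf hgp
      have : p.1 = p.2 := by
        have := congrArg Prod.fst hgp
        exact this.symm ▸ rfl
      apply hf
      refine dif_neg fun hc => hc.2.1 ?_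
      rw [← this]
      exact Finset.mem_insert_self _ _


/-- neighbors of `v` -/
noncomputable def nbhdF (K : SComplex V) (v : V) : Finset V :=
  univ.filter (fun x => x ≠ v ∧ ({v, x} : Finset V) ∈ K.faces)

lemma mem_nbhdF {K : SComplex V} {v x : V} :
    x ∈ K.nbhdF v ↔ x ≠ v ∧ ({v, x} : Finset V) ∈ K.faces := by
  simp [nbhdF]

lemma face_pair {K : SComplex V} {F : Finset V} (hF : F ∈ K.faces) {a b : V}
    (ha : a ∈ F) (hb : b ∈ F) : ({a, b} : Finset V) ∈ K.faces :=
  K.down_closed hF (Finset.insert_subset ha (Finset.singleton_subset_iff.mpr hb))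

lemma flag_insert_face {K : SComplex V} (hflag : K.IsFlag) {F : Finset V}
    (hF : F ∈ K.faces) {v : V} (hv : ∀ x ∈ F, x ∈ K.nbhdF v) : insert v F ∈ K.faces := by
  apply hflag
  intro a ha b hb hab
  rcases Finset.mem_insert.mp ha with rfl | haF
  · rcases Finset.mem_insert.mp hb with rfl | hbF
    · exact absurd rfl hab
    · exact (mem_nbhdF.mp (hv b hbF)).2
  · rcases Finset.mem_insert.mp hb with rfl | hbF
    · rw [Finset.pair_comm]
      exact (mem_nbhdF.mp (hv a haF)).2
    · exact face_pair hF haF hbF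

lemma sgn_swap' {ρ : Finset V} {v x : V} (hv : v ∉ ρ) (hx : x ∉ ρ) (hxv : x ≠ v) :
    sgn R ρ x * sgn R (insert x ρ) v = -(sgn R ρ v * sgn R (insert v ρ) x) := by
  rw [sgn_insert _ hx, sgn_insert _ hv]
  rcases hxv.lt_or_gt with h | h
  · rw [if_neg (asymm h), if_pos h]; ring
  · rw [if_pos h, if_neg (asymm h)]; ring

/-- restriction of a chain to the link of `v` (contraction with `v`). -/
noncomputable def resV {K : SComplex V} {j : ℕ} (v : V) (z : K.chains R (j+1)) :
    K.chains R j :=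
  Finsupp.equivFunOnFinite.symm (fun τ =>
    if h : v ∉ τ.1 ∧ insert v τ.1 ∈ K.faces then sgn R τ.1 v * z (ins τ v h) else 0)

lemma resV_apply {K : SComplex V} {j : ℕ} (v : V) (z : K.chains R (j+1)) (τ : K.simplex j) :
    resV v z τ =
      if h : v ∉ τ.1 ∧ insert v τ.1 ∈ K.faces then sgn R τ.1 v * z (ins τ v h) else 0 :=
  congrFun (Finsupp.coe_equivFunOnFinite_symm _) _

/-- cone of a chain over apex `v`. -/
noncomputable def coneV {K : SComplex V} {j : ℕ} (v : V) (w : K.chains R (j+1)) :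
    K.chains R (j+2) :=
  Finsupp.equivFunOnFinite.symm (fun s =>
    if h : v ∈ s.1 then sgn R (s.1.erase v) v *
      w ⟨s.1.erase v, K.down_closed s.2.1 (Finset.erase_subset _ _),
        by simp [Finset.card_erase_of_mem h, s.2.2]⟩ else 0)

lemma coneV_apply {K : SComplex V} {j : ℕ} (v : V) (w : K.chains R (j+1))
    (s : K.simplex (j+2)) :
    coneV v w s = if h : v ∈ s.1 then sgn R (s.1.erase v) v *
      w ⟨s.1.erase v, K.down_closed s.2.1 (Finset.erase_subset _ _),
        by simp [Finset.card_erase_of_mem h, s.2.2]⟩ else 0 :=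
  congrFun (Finsupp.coe_equivFunOnFinite_symm _) _

lemma suppIn_resV {K : SComplex V} {j : ℕ} {v : V} {z : K.chains R (j+1)} {W : Finset V}
    (h : suppIn z W) : suppIn (resV v z) (W.filter (· ∈ K.nbhdF v)) := by
  intro τ hτ
  rw [resV_apply] at hτ
  by_cases hc : v ∉ τ.1 ∧ insert v τ.1 ∈ K.faces
  · rw [dif_pos hc] at hτ
    have hz : z (ins τ v hc) ≠ 0 := fun h0 => hτ (by rw [h0, mul_zero])
    intro t ht
    refine Finset.mem_filter.mpr ⟨h _ hz (Finset.mem_insert_of_mem ht), mem_nbhdF.mpr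
      ⟨fun h' => hc.1 (h' ▸ ht), K.down_closed hc.2
        (Finset.insert_subset (Finset.mem_insert_self _ _) (Finset.singleton_subset_iff.mpr
          (Finset.mem_insert_of_mem ht)))⟩⟩
  · rw [dif_neg hc] at hτ
    exact absurd rfl hτ

lemma suppIn_coneV {K : SComplex V} {j : ℕ} {v : V} {w : K.chains R (j+1)} {W : Finset V}
    (h : suppIn w W) : suppIn (coneV v w) (insert v W) := by
  intro s hs
  rw [coneV_apply] at hs
  by_cases hc : v ∈ s.1
  · rw [dif_pos hc] at hs
    have hz := right_ne_zero_of_mul hs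
    intro t ht
    rcases eq_or_ne t v with rfl | htv
    · exact Finset.mem_insert_self _ _
    · exact Finset.mem_insert_of_mem (h _ hz (Finset.mem_erase.mpr ⟨htv, ht⟩))
  · rw [dif_neg hc] at hs
    exact absurd rfl hs

lemma bdry_resV {K : SComplex V} {j : ℕ} (v : V) (z : K.chains R (j+2))
    (hz : K.bdry R (j+1) z = 0) : K.bdry R j (resV v z) = 0 := by
  classical
  ext ρ
  rw [bdry_apply, Finsupp.coe_zero, Pi.zero_apply]
  by_cases hvρ : v ∈ ρ.1
  · refine Finset.sum_eq_zero fun x _ => ?_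
    by_cases h1 : x ∉ ρ.1 ∧ insert x ρ.1 ∈ K.faces
    · rw [dif_pos h1, resV_apply,
        dif_neg (fun hc => hc.1 (Finset.mem_insert_of_mem hvρ) : ¬(v ∉ (ins ρ x h1).1 ∧ _)),
        mul_zero]
    · exact dif_neg h1
  · by_cases hvf : insert v ρ.1 ∈ K.faces
    · have hv : v ∉ ρ.1 ∧ insert v ρ.1 ∈ K.faces := ⟨hvρ, hvf⟩
      have key : (∑ x : V, if h : x ∉ ρ.1 ∧ insert x ρ.1 ∈ K.faces
          then sgn R ρ.1 x * resV v z (ins ρ x h) else 0) =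
          -sgn R ρ.1 v * ∑ x : V, (if h : x ∉ (ins ρ v hv).1 ∧ insert x (ins ρ v hv).1 ∈ K.faces
            then sgn R (ins ρ v hv).1 x * z (ins (ins ρ v hv) x h) else 0) := by
        rw [Finset.mul_sum]
        refine Finset.sum_congr rfl fun x _ => ?_
        by_cases h1 : x ∉ ρ.1 ∧ insert x ρ.1 ∈ K.faces
        · rw [dif_pos h1, resV_apply]
          by_cases h2 : v ∉ (ins ρ x h1).1 ∧ insert v (ins ρ x h1).1 ∈ K.faces
          · have hxv : x ≠ v := fun h => h2.1 (h ▸ Finset.mem_insert_self _ _)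
            have hc : x ∉ (ins ρ v hv).1 ∧ insert x (ins ρ v hv).1 ∈ K.faces := by
              constructor
              · intro hm
                rcases Finset.mem_insert.mp hm with h | h
                · exact hxv h
                · exact h1.1 h
              · show insert x (insert v ρ.1) ∈ K.faces
                rw [Finset.insert_comm]
                exact h2.2
            rw [dif_pos h2, dif_pos hc]
            have harg : z (ins (ins ρ x h1) v h2) = z (ins (ins ρ v hv) x hc) := by
              congr 1
              exact Subtype.ext (Finset.insert_comm _ _ _)
            rw [harg]
            show sgn R ρ.1 x * (sgn R (insert x ρ.1) v * z (ins (ins ρ v hv) x hc)) =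
              -sgn R ρ.1 v * (sgn R (insert v ρ.1) x * z (ins (ins ρ v hv) x hc))
            rw [← mul_assoc, sgn_swap' hv.1 h1.1 hxv]
            ring
          · rw [dif_neg h2, mul_zero, dif_neg, mul_zero]
            intro hc
            refine h2 ⟨fun hm => ?_, ?_⟩
            · rcases Finset.mem_insert.mp hm with h | h
              · exact hc.1 (h ▸ Finset.mem_insert_self _ _)
              · exact hvρ h
            · show insert v (insert x ρ.1) ∈ K.faces
              rw [Finset.insert_comm]
              exact hc.2
        · rw [dif_neg h1, dif_neg, mul_zero]
          intro hc
          refine h1 ⟨fun hm => hc.1 (Finset.mem_insert_of_mem hm),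
            K.down_closed hc.2 ?_⟩
          show insert x ρ.1 ⊆ insert x (insert v ρ.1)
          exact Finset.insert_subset_insert _ (Finset.subset_insert _ _)
      rw [key, ← bdry_apply, hz]
      simp
    · refine Finset.sum_eq_zero fun x _ => ?_
      by_cases h1 : x ∉ ρ.1 ∧ insert x ρ.1 ∈ K.faces
      · rw [dif_pos h1, resV_apply, dif_neg, mul_zero]
        intro hc
        refine hvf (K.down_closed hc.2 ?_)
        show insert v ρ.1 ⊆ insert v (insert x ρ.1)
        exact Finset.insert_subset_insert _ (Finset.subset_insert _ _)
      · exact dif_neg h1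


lemma chain_congr {K : SComplex V} {j : ℕ} (w : K.chains R j) {A B : K.simplex j}
    (h : A.1 = B.1) : w A = w B := by
  congr 1
  exact Subtype.ext h

lemma bdry_coneV_of_nbhd {K : SComplex V} (hflag : K.IsFlag) {j : ℕ} {v : V}
    {w : K.chains R (j+1)} (hw : suppIn w (K.nbhdF v)) (τ : K.simplex (j+1)) (hvτ : v ∈ τ.1)
    (ρs : K.simplex j) (hρ : ρs.1 = τ.1.erase v) :
    K.bdry R (j+1) (coneV v w) τ = -(sgn R ρs.1 v * K.bdry R j w ρs) := by
  classical
  have hvρ : v ∉ ρs.1 := by rw [hρ]; exact Finset.notMem_erase _ _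
  have hτρ : insert v ρs.1 = τ.1 := by rw [hρ]; exact Finset.insert_erase hvτ
  rw [bdry_apply, bdry_apply, Finset.mul_sum, ← Finset.sum_neg_distrib]
  refine Finset.sum_congr rfl fun x _ => ?_
  by_cases h1 : x ∉ τ.1 ∧ insert x τ.1 ∈ K.faces
  · have hxv : x ≠ v := fun h => h1.1 (h ▸ hvτ)
    have hxρ : x ∉ ρs.1 := fun h => h1.1 (by rw [hρ] at h; exact Finset.mem_of_mem_erase h)
    have hc : x ∉ ρs.1 ∧ insert x ρs.1 ∈ K.faces := by
      refine ⟨hxρ, K.down_closed h1.2 ?_⟩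
      rw [← hτρ]
      exact Finset.insert_subset_insert _ (Finset.subset_insert _ _)
    have hmem : v ∈ (ins τ x h1).1 := Finset.mem_insert_of_mem hvτ
    rw [dif_pos h1, dif_pos hc, coneV_apply, dif_pos hmem]
    have herase : ((ins τ x h1).1).erase v = insert x ρs.1 := by
      show (insert x τ.1).erase v = _
      rw [Finset.erase_insert_of_ne hxv, hρ]
    erw [chain_congr (A := ⟨((ins τ x h1).1).erase v, K.down_closed (ins τ x h1).2.1 (Finset.erase_subset _ _),
        by simp [Finset.card_erase_of_mem hmem, (ins τ x h1).2.2]⟩) (B := ins ρs x hc) w (show ((ins τ x h1).1).erase v = (ins ρs x hc).1 from herase), herase]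
    rw [show sgn R τ.1 x = sgn R (insert v ρs.1) x by rw [hτρ], ← mul_assoc,
      sgn_swap hvρ hxρ hxv]
    ring
  · rw [dif_neg h1]
    by_cases hc : x ∉ ρs.1 ∧ insert x ρs.1 ∈ K.faces
    · rw [dif_pos hc]
      have hw0 : w (ins ρs x hc) = 0 := by
        by_contra hne
        have hsub := hw _ hne
        have hface : insert v (insert x ρs.1) ∈ K.faces :=
          flag_insert_face hflag hc.2 (fun t ht => hsub ht)
        apply h1
        constructor
        · intro hxτ
          rw [← hτρ] at hxτ
          rcases Finset.mem_insert.mp hxτ with h | h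
          · exact (mem_nbhdF.mp (hsub (Finset.mem_insert_self _ _))).1 h
          · exact hc.1 h
        · rw [← hτρ, Finset.insert_comm]
          exact hface
      rw [hw0, mul_zero, mul_zero, neg_zero]
    · rw [dif_neg hc, mul_zero, neg_zero]

lemma bdry_coneV_self {K : SComplex V} (hflag : K.IsFlag) {j : ℕ} {v : V}
    {z : K.chains R (j+1)} (hz : K.bdry R j z = 0)
    (hsupp : suppIn z (insert v (K.nbhdF v))) :
    K.bdry R (j+1) (coneV v z) = z := by
  classical
  ext τ
  rw [bdry_apply]
  by_cases hvτ : v ∈ τ.1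
  · obtain ⟨ρs, hρ⟩ : ∃ ρs : K.simplex j, ρs.1 = τ.1.erase v :=
      ⟨⟨τ.1.erase v, K.down_closed τ.2.1 (Finset.erase_subset _ _),
        by simp [Finset.card_erase_of_mem hvτ, τ.2.2]⟩, rfl⟩
    have hvρ : v ∉ ρs.1 := by rw [hρ]; exact Finset.notMem_erase _ _
    have hτρ : insert v ρs.1 = τ.1 := by rw [hρ]; exact Finset.insert_erase hvτ
    have hcv : v ∉ ρs.1 ∧ insert v ρs.1 ∈ K.faces := ⟨hvρ, hτρ ▸ τ.2.1⟩
    trans (∑ x : V, (-(sgn R ρs.1 v * (if h : x ∉ ρs.1 ∧ insert x ρs.1 ∈ K.faces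
        then sgn R ρs.1 x * z (ins ρs x h) else 0)) +
      (if x = v then sgn R ρs.1 v * sgn R ρs.1 v * z τ else 0)))
    · refine Finset.sum_congr rfl fun x _ => ?_
      rcases eq_or_ne x v with rfl | hxv
      · rw [dif_neg (fun h : x ∉ τ.1 ∧ _ => h.1 hvτ), if_pos rfl, dif_pos hcv,
          chain_congr z (show (ins ρs x hcv).1 = τ.1 from hτρ)]
        ring
      · rw [if_neg hxv, add_zero]
        by_cases h1 : x ∉ τ.1 ∧ insert x τ.1 ∈ K.faces
        · have hxρ : x ∉ ρs.1 := fun h => h1.1 (by rw [hρ] at h; exact Finset.mem_of_mem_erase h)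
          have hc : x ∉ ρs.1 ∧ insert x ρs.1 ∈ K.faces := by
            refine ⟨hxρ, K.down_closed h1.2 ?_⟩
            rw [← hτρ]
            exact Finset.insert_subset_insert _ (Finset.subset_insert _ _)
          have hmem : v ∈ (ins τ x h1).1 := Finset.mem_insert_of_mem hvτ
          rw [dif_pos h1, dif_pos hc, coneV_apply, dif_pos hmem]
          have herase : ((ins τ x h1).1).erase v = insert x ρs.1 := by
            show (insert x τ.1).erase v = _
            rw [Finset.erase_insert_of_ne hxv, hρ]
          erw [chain_congr (A := ⟨((ins τ x h1).1).erase v, K.down_closed (ins τ x h1).2.1 (Finset.erase_subset _ _),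
        by simp [Finset.card_erase_of_mem hmem, (ins τ x h1).2.2]⟩) (B := ins ρs x hc) z (show ((ins τ x h1).1).erase v = (ins ρs x hc).1 from herase), herase]
          rw [show sgn R τ.1 x = sgn R (insert v ρs.1) x by rw [hτρ], ← mul_assoc,
            sgn_swap hvρ hxρ hxv]
          ring
        · rw [dif_neg h1]
          by_cases hc : x ∉ ρs.1 ∧ insert x ρs.1 ∈ K.faces
          · rw [dif_pos hc]
            have hw0 : z (ins ρs x hc) = 0 := by
              by_contra hne
              have hsub := hsupp _ hne
              have hsub' : ∀ t ∈ insert x ρs.1, t ∈ K.nbhdF v := by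
                intro t ht
                rcases Finset.mem_insert.mp (hsub ht) with h | h
                · exfalso
                  rcases Finset.mem_insert.mp ht with h' | h'
                  · exact hxv (h'.symm.trans h)
                  · exact hvρ (h ▸ h')
                · exact h
              have hface : insert v (insert x ρs.1) ∈ K.faces :=
                flag_insert_face hflag hc.2 hsub'
              apply h1
              constructor
              · intro hxτ
                rw [← hτρ] at hxτ
                rcases Finset.mem_insert.mp hxτ with h | h
                · exact hxv h
                · exact hc.1 h
              · rw [← hτρ, Finset.insert_comm]
                exact hface
            rw [hw0, mul_zero, mul_zero, neg_zero]
          · rw [dif_neg hc, mul_zero, neg_zero]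
    · rw [Finset.sum_add_distrib, Finset.sum_neg_distrib, ← Finset.mul_sum, ← bdry_apply, hz,
        Finset.sum_ite_eq' Finset.univ v, if_pos (Finset.mem_univ v)]
      rw [Finsupp.coe_zero, Pi.zero_apply, mul_zero, neg_zero, zero_add, sgn_mul_self, one_mul]
  · refine Eq.trans (Finset.sum_eq_single_of_mem v (Finset.mem_univ v) (fun x _ hxv => ?_)) ?_
    · by_cases h1 : x ∉ τ.1 ∧ insert x τ.1 ∈ K.faces
      · rw [dif_pos h1, coneV_apply, dif_neg, mul_zero]
        intro hm
        rcases Finset.mem_insert.mp hm with h | h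
        · exact hxv h.symm
        · exact hvτ h
      · exact dif_neg h1
    · by_cases h1 : v ∉ τ.1 ∧ insert v τ.1 ∈ K.faces
      · have hmem : v ∈ (ins τ v h1).1 := Finset.mem_insert_self v τ.1
        rw [dif_pos h1, coneV_apply, dif_pos hmem]
        have her : ((ins τ v h1).1).erase v = τ.1 := by
          show (insert v τ.1).erase v = τ.1
          exact Finset.erase_insert hvτ
        erw [chain_congr (A := ⟨((ins τ v h1).1).erase v, K.down_closed (ins τ v h1).2.1 (Finset.erase_subset _ _),
        by simp [Finset.card_erase_of_mem hmem, (ins τ v h1).2.2]⟩) (B := τ) z (show ((ins τ v h1).1).erase v = τ.1 from her), her, ← mul_assoc,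
          sgn_mul_self, one_mul]
      · rw [dif_neg h1]
        have hzτ : z τ = 0 := by
          by_contra hne
          have hsub := hsupp _ hne
          refine h1 ⟨hvτ, flag_insert_face hflag τ.2.1 fun t ht => ?_⟩
          rcases Finset.mem_insert.mp (hsub ht) with h | h
          · exact absurd (h ▸ ht) hvτ
          · exact h
        rw [hzτ]


lemma suppIn_mono {K : SComplex V} {j : ℕ} {z : K.chains R j} {W W' : Finset V}
    (h : suppIn z W) (hsub : W ⊆ W') : suppIn z W' :=
  fun s hs => (h s hs).trans hsub

lemma suppIn_add {K : SComplex V} {j : ℕ} {z₁ z₂ : K.chains R j} {W : Finset V}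
    (h1 : suppIn z₁ W) (h2 : suppIn z₂ W) : suppIn (z₁ + z₂) W := by
  intro s hs
  rw [Finsupp.add_apply] at hs
  by_cases h : z₁ s = 0
  · refine h2 s fun h0 => hs ?_
    rw [h, h0, add_zero]
  · exact h1 s h

lemma suppIn_sub {K : SComplex V} {j : ℕ} {z₁ z₂ : K.chains R j} {W : Finset V}
    (h1 : suppIn z₁ W) (h2 : suppIn z₂ W) : suppIn (z₁ - z₂) W := by
  intro s hs
  rw [Finsupp.sub_apply] at hs
  by_cases h : z₁ s = 0
  · refine h2 s fun h0 => hs ?_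
    rw [h, h0, sub_zero]
  · exact h1 s h

lemma keyL {K : SComplex V} (hflag : K.IsFlag) :
    ∀ (n : ℕ) (W : Finset V), W.card = n → ∀ (j : ℕ) (z : K.chains R (j+1)),
      K.bdry R j z = 0 → suppIn z W →
      (∀ u : K.chains R (j+2), suppIn u W → K.bdry R (j+1) u ≠ z) →
      2*j + 2 ≤ W.card := by
  classical
  intro n
  induction n using Nat.strong_induction_on with
  | _ n IH =>
  intro W hWn j z hcyc hsupp hnb
  have hz0 : z ≠ 0 := by
    rintro rfl
    exact hnb 0 (fun s hs => absurd rfl hs) (map_zero _)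
  obtain ⟨s₀, hs₀⟩ : ∃ s₀, z s₀ ≠ 0 := by
    by_contra h
    push_neg at h
    exact hz0 (DFunLike.ext _ _ h)
  cases j with
  | zero =>
    obtain ⟨x₀, hx₀⟩ := Finset.card_eq_one.mp s₀.2.2
    have hx₀W : x₀ ∈ W := hsupp _ hs₀ (by rw [hx₀]; exact Finset.mem_singleton_self x₀)
    obtain ⟨e, he1⟩ : ∃ e : K.simplex 0, e.1 = ∅ := ⟨⟨∅, K.empty_mem, rfl⟩, rfl⟩
    have he : K.bdry R 0 z e = 0 := by rw [hcyc]; rfl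
    rw [bdry_apply] at he
    have hc : x₀ ∉ e.1 ∧ insert x₀ e.1 ∈ K.faces := by
      rw [he1]
      refine ⟨Finset.notMem_empty x₀, ?_⟩
      have : insert x₀ (∅ : Finset V) = s₀.1 := by rw [hx₀]; simp
      rw [this]
      exact s₀.2.1
    have hterm : sgn R e.1 x₀ * z (ins e x₀ hc) ≠ 0 := by
      have harg : z (ins e x₀ hc) = z s₀ := by
        refine chain_congr z ?_
        show insert x₀ e.1 = s₀.1
        rw [he1, hx₀]
        simp
      have hsgn : sgn R e.1 x₀ = 1 := by rw [he1]; simp [sgn]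
      rw [harg, hsgn, one_mul]
      exact hs₀
    have hex : ∃ x₁, x₁ ≠ x₀ ∧ (if h : x₁ ∉ e.1 ∧ insert x₁ e.1 ∈ K.faces then
        sgn R e.1 x₁ * z (ins e x₁ h) else 0) ≠ 0 := by
      by_contra hall
      push_neg at hall
      rw [Finset.sum_eq_single_of_mem x₀ (Finset.mem_univ _)
        (fun x _ hx => hall x hx), dif_pos hc] at he
      exact hterm he
    obtain ⟨x₁, hx₁ne, hx₁term⟩ := hex
    have hc1 : x₁ ∉ e.1 ∧ insert x₁ e.1 ∈ K.faces := by
      by_contra h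
      rw [dif_neg h] at hx₁term
      exact hx₁term rfl
    rw [dif_pos hc1] at hx₁term
    have hz1 : z (ins e x₁ hc1) ≠ 0 := right_ne_zero_of_mul hx₁term
    have hx₁W : x₁ ∈ W := hsupp _ hz1 (Finset.mem_insert_self _ _)
    have hss : ({x₁, x₀} : Finset V) ⊆ W :=
      Finset.insert_subset hx₁W (Finset.singleton_subset_iff.mpr hx₀W)
    have := Finset.card_le_card hss
    rw [Finset.card_pair hx₁ne] at this
    omega
  | succ m =>
    have hpos : s₀.1.Nonempty := by
      rw [← Finset.card_pos, s₀.2.2]; omega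
    obtain ⟨v, hv⟩ := hpos
    have hvW : v ∈ W := hsupp _ hs₀ hv
    have hn1 : 1 ≤ n := by
      rw [← hWn]
      exact Finset.card_pos.mpr ⟨v, hvW⟩
    set W₁ := W.filter (· ∈ K.nbhdF v) with hW₁def
    have hW₁nb : W₁ ⊆ K.nbhdF v := fun t ht => (Finset.mem_filter.mp ht).2
    have hW₁sub : W₁ ⊆ W.erase v := by
      intro t ht
      rw [Finset.mem_erase]
      have := Finset.mem_filter.mp ht
      exact ⟨(mem_nbhdF.mp this.2).1, this.1⟩
    have hW₁W : insert v W₁ ⊆ W :=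
      Finset.insert_subset hvW ((hW₁sub.trans (Finset.erase_subset _ _)))
    by_cases hcase : ∃ w : K.chains R (m+2), suppIn w W₁ ∧ K.bdry R (m+1) w = resV v z
    · obtain ⟨w, hwsupp, hwbd⟩ := hcase
      have hwnb : suppIn w (K.nbhdF v) := suppIn_mono hwsupp hW₁nb
      set z' := z + K.bdry R (m+2) (coneV v w) with hz'def
      have hvanish : ∀ τ : K.simplex (m+2), v ∈ τ.1 → z' τ = 0 := by
        intro τ hvτ
        obtain ⟨ρs, hρ⟩ : ∃ ρs : K.simplex (m+1), ρs.1 = τ.1.erase v :=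
          ⟨⟨τ.1.erase v, K.down_closed τ.2.1 (Finset.erase_subset _ _),
            by simp [Finset.card_erase_of_mem hvτ, τ.2.2]⟩, rfl⟩
        have hτρ : insert v ρs.1 = τ.1 := by rw [hρ]; exact Finset.insert_erase hvτ
        have hcv : v ∉ ρs.1 ∧ insert v ρs.1 ∈ K.faces :=
          ⟨by rw [hρ]; exact Finset.notMem_erase _ _, hτρ ▸ τ.2.1⟩
        rw [hz'def, Finsupp.add_apply, bdry_coneV_of_nbhd hflag hwnb τ hvτ ρs hρ, hwbd,
          resV_apply, dif_pos hcv, chain_congr z (show (ins ρs v hcv).1 = τ.1 from hτρ),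
          ← mul_assoc, sgn_mul_self, one_mul]
        exact add_neg_cancel _
      have hz'cyc : K.bdry R (m+1) z' = 0 := by
        rw [hz'def, map_add, hcyc, bdry_bdry, zero_add]
      have hz'W : suppIn z' W :=
        suppIn_add hsupp (suppIn_bdry (suppIn_mono (suppIn_coneV hwsupp) hW₁W))
      have hz'supp : suppIn z' (W.erase v) := by
        intro s hs
        have hsv : v ∉ s.1 := fun hvs => hs (hvanish s hvs)
        exact fun t ht => Finset.mem_erase.mpr ⟨fun h => hsv (h ▸ ht), hz'W s hs ht⟩
      have hz'nb : ∀ u : K.chains R (m+3), suppIn u (W.erase v) → K.bdry R (m+2) u ≠ z' := by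
        intro u hu hbd
        refine hnb (u - coneV v w) (suppIn_sub (suppIn_mono hu (Finset.erase_subset _ _))
          (suppIn_mono (suppIn_coneV hwsupp) hW₁W)) ?_
        rw [map_sub, hbd, hz'def]
        exact add_sub_cancel_right _ _
      have hIH := IH ((W.erase v).card)
        (by rw [Finset.card_erase_of_mem hvW, hWn]; omega) (W.erase v) rfl (m+1) z'
        hz'cyc hz'supp hz'nb
      have := Finset.card_le_card (Finset.erase_subset v W)
      omega
    · push_neg at hcase
      have hres_cyc : K.bdry R m (resV v z) = 0 := bdry_resV v z hcyc
      have hres_supp : suppIn (resV v z) W₁ := suppIn_resV hsupp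
      have hW₁card : W₁.card < n := by
        have h1 := Finset.card_le_card hW₁sub
        rw [Finset.card_erase_of_mem hvW, hWn] at h1
        omega
      have hIH := IH W₁.card hW₁card W₁ rfl m (resV v z) hres_cyc hres_supp hcase
      by_cases hWsub : W ⊆ insert v W₁
      · exfalso
        have hsupp' : suppIn z (insert v (K.nbhdF v)) := by
          intro s hs t ht
          rcases Finset.mem_insert.mp (hWsub (hsupp _ hs ht)) with h | h
          · exact Finset.mem_insert.mpr (Or.inl h)
          · exact Finset.mem_insert_of_mem (Finset.mem_filter.mp h).2
        exact hnb (coneV v z) (suppIn_mono (suppIn_coneV hsupp)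
          (Finset.insert_subset hvW (le_refl W))) (bdry_coneV_self hflag hcyc hsupp')
      · obtain ⟨w₀, hw₀W, hw₀n⟩ := Finset.not_subset.mp hWsub
        have hvW₁ : v ∉ W₁ := fun h => (mem_nbhdF.mp (Finset.mem_filter.mp h).2).1 rfl
        have hsub2 : insert w₀ (insert v W₁) ⊆ W :=
          Finset.insert_subset hw₀W hW₁W
        have hcard := Finset.card_le_card hsub2
        rw [Finset.card_insert_of_notMem hw₀n, Finset.card_insert_of_notMem hvW₁] at hcard
        omega



end SComplex


open SComplex

/-- Let `Δ` be a flag `(d-1)`-dimensional minimal cycle (over a field `k`), on the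
full vertex set.  Then the 1-skeleton of `Δ` is `(2d - 2)`-connected. -/
theorem stmt17 (k : Type) [Field k] {V : Type} [Fintype V] [LinearOrder V]
    (K : SComplex V) (d : ℕ) (hd : 1 ≤ d)
    (hv : ∀ v : V, ({v} : Finset V) ∈ K.faces)
    (hflag : K.IsFlag) (hmin : K.IsMinimalCycle k (d - 1)) :
    KConn K.skeleton (2 * d - 2) := by

  classical
  rcases Nat.lt_or_ge d 2 with hd2 | hd2
  · interval_cases d
    exact ⟨by omega, fun S hS => absurd hS (by omega)⟩
  · obtain ⟨e, rfl⟩ : ∃ e, d = e + 2 := ⟨d - 2, by omega⟩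
    have hmin' : K.IsMinimalCycle k (e + 1) := by
      have h21 : e + 2 - 1 = e + 1 := by omega
      rw [h21] at hmin
      exact hmin
    obtain ⟨hdim, hpure, ζ, hζcyc, hζfull, hζmin⟩ := hmin'
    have hζbd : K.bdry k (e+1) ζ = 0 := LinearMap.mem_ker.mp hζcyc
    have hbdd : BddAbove {j | ∃ F ∈ K.faces, F.card = j} := by
      refine ⟨Fintype.card V, ?_⟩
      rintro j ⟨F, hF, rfl⟩
      exact F.card_le_univ
    have hnobig : ∀ F ∈ K.faces, F.card ≤ e + 2 := by
      intro F hF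
      have : F.card ≤ K.dimP1 := le_csSup hbdd ⟨F, hF, rfl⟩
      omega
    -- some facet of cardinality e+2 exists
    have hmax := Nat.sSup_mem (⟨0, ∅, K.empty_mem, rfl⟩ :
      Set.Nonempty {j | ∃ F ∈ K.faces, F.card = j}) hbdd
    rw [show sSup {j | ∃ F ∈ K.faces, F.card = j} = K.dimP1 from rfl, hdim] at hmax
    obtain ⟨F₀, hF₀, hF₀card⟩ := hmax
    -- Part 1 : many vertices
    have hpart1 : 2*(e+1) + 2 ≤ (Finset.univ : Finset V).card := by
      refine keyL hflag _ Finset.univ rfl (e+1) ζ hζbd (fun s _ => Finset.subset_univ _) ?_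
      intro u _ hbd
      have hu0 : u = 0 := by
        ext s
        exact absurd (hnobig s.1 s.2.1) (by rw [s.2.2]; omega)
      rw [hu0, map_zero] at hbd
      exact hζfull ⟨F₀, hF₀, hF₀card⟩ (by rw [← hbd]; rfl)
    rw [Finset.card_univ] at hpart1
    constructor
    · omega
    · intro S hS
      have hScard : S.card < 2*e + 2 := by omega
      rw [SimpleGraph.connected_iff]
      have hVS : ∃ x, x ∉ S := by
        by_contra h
        push_neg at h
        have := Finset.card_le_card (fun x _ => h x : (Finset.univ : Finset V) ⊆ S)
        rw [Finset.card_univ] at this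
        omega
      obtain ⟨x₀, hx₀⟩ := hVS
      refine ⟨?_, ⟨⟨x₀, by simp [hx₀]⟩⟩⟩
      intro a b
      by_contra hnr
      -- the reachable set of `a`
      set A : Finset V := Finset.univ.filter
        (fun x => ∃ hx : x ∈ ((↑S : Set V)ᶜ),
          (SimpleGraph.induce ((↑S : Set V)ᶜ) K.skeleton).Reachable a ⟨x, hx⟩) with hAdef
      have hmemA : ∀ x : V, x ∈ A ↔ ∃ hx : x ∈ ((↑S : Set V)ᶜ),
          (SimpleGraph.induce ((↑S : Set V)ᶜ) K.skeleton).Reachable a ⟨x, hx⟩ := by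
        intro x
        rw [hAdef, Finset.mem_filter]
        simp
      have haA : (a : V) ∈ A := (hmemA a).mpr ⟨a.2, by rw [Subtype.coe_eta]⟩
      have hbA : (b : V) ∉ A := by
        intro h
        obtain ⟨hx, hr⟩ := (hmemA b).mp h
        rw [Subtype.coe_eta] at hr
        exact hnr hr
      have hAnS : ∀ x ∈ A, x ∉ S := by
        intro x hx
        obtain ⟨h, -⟩ := (hmemA x).mp hx
        simpa using h
      -- reachability closure along faces
      have hclose : ∀ F ∈ K.faces, ∀ x ∈ F, ∀ y ∈ F, x ∈ A → y ∉ S → y ∈ A := by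
        intro F hF x hxF y hyF hxA hyS
        obtain ⟨hx, hr⟩ := (hmemA x).mp hxA
        have hy : y ∈ ((↑S : Set V)ᶜ) := by simpa using hyS
        rcases eq_or_ne x y with rfl | hne
        · exact hxA
        · refine (hmemA y).mpr ⟨hy, hr.trans (SimpleGraph.Adj.reachable ?_)⟩
          show K.skeleton.Adj x y
          exact ⟨hne, face_pair hF hxF hyF⟩
      -- restricted cycle
      set ζA : K.chains k (e+1+1) := Finsupp.equivFunOnFinite.symm
        (fun s => if ∃ x ∈ s.1, x ∈ A then ζ s else 0) with hζAdef
      have hζAapply : ∀ s, ζA s = if ∃ x ∈ s.1, x ∈ A then ζ s else 0 := fun s =>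
        congrFun (Finsupp.coe_equivFunOnFinite_symm _) _
      set z : K.chains k (e+1) := K.bdry k (e+1) ζA with hzdef
      have hkey := keyL hflag S.card S rfl e z (bdry_bdry K e ζA) ?_ ?_
      · omega
      · -- suppIn z S
        intro τ hτz t ht
        by_contra htS
        -- find a cofacet meeting A
        have htA : t ∈ A := by
          have hτz' := hτz
          rw [hzdef, bdry_apply] at hτz'
          obtain ⟨x', -, hx'⟩ := Finset.exists_ne_zero_of_sum_ne_zero hτz'
          by_cases hcx : x' ∉ τ.1 ∧ insert x' τ.1 ∈ K.faces
          · rw [dif_pos hcx] at hx'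
            have hζA0 : ζA (ins τ x' hcx) ≠ 0 := right_ne_zero_of_mul hx'
            rw [hζAapply] at hζA0
            have hcond : ∃ y ∈ (ins τ x' hcx).1, y ∈ A := by
              by_contra hc
              rw [if_neg hc] at hζA0
              exact hζA0 rfl
            obtain ⟨y, hy1, hy2⟩ := hcond
            exact hclose _ hcx.2 y hy1 t (Finset.mem_insert_of_mem ht) hy2 htS
          · rw [dif_neg hcx] at hx'
            exact absurd rfl hx'
        -- then all cofacets meet A, so z τ = (∂ζ) τ = 0
        apply hτz
        rw [hzdef, bdry_apply]
        have : ∀ x : V, (if h : x ∉ τ.1 ∧ insert x τ.1 ∈ K.faces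
            then sgn k τ.1 x * ζA (ins τ x h) else 0) =
            (if h : x ∉ τ.1 ∧ insert x τ.1 ∈ K.faces
            then sgn k τ.1 x * ζ (ins τ x h) else 0) := by
          intro x
          by_cases hcx : x ∉ τ.1 ∧ insert x τ.1 ∈ K.faces
          · rw [dif_pos hcx, dif_pos hcx, hζAapply,
              if_pos ⟨t, Finset.mem_insert_of_mem ht, htA⟩]
          · rw [dif_neg hcx, dif_neg hcx]
        rw [Finset.sum_congr rfl fun x _ => this x, ← bdry_apply, hζbd]
        rfl
      · -- non-bounding over S
        intro u husupp hubd
        have hdiff : K.bdry k (e+1) (ζA - u) = 0 := by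
          rw [map_sub, hubd, hzdef, sub_self]
        obtain ⟨c, hc⟩ := hζmin _ (LinearMap.mem_ker.mpr hdiff)
        -- facet containing b
        obtain ⟨Fb, hFbface, hFbsub, hFbcard⟩ := hpure {(b : V)} (hv b)
        have hbFb : (b : V) ∈ Fb := hFbsub (Finset.mem_singleton_self _)
        have hbS : (b : V) ∉ S := fun h => b.2 (Finset.mem_coe.mpr h)
        have hζAb : ζA (⟨Fb, hFbface, hFbcard⟩ : K.simplex (e+1+1)) = 0 := by
          erw [hζAapply, if_neg]
          rintro ⟨y, hy1, hy2⟩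
          exact hbA (hclose _ hFbface y hy1 b hbFb hy2 hbS)
        have hub : u (⟨Fb, hFbface, hFbcard⟩ : K.simplex (e+1+1)) = 0 := by
          by_contra hne
          exact hbS (husupp _ hne hbFb)
        have hc0 : c = 0 := by
          have := congrArg (fun w => w (⟨Fb, hFbface, hFbcard⟩ : K.simplex (e+1+1))) hc
          beta_reduce at this
          erw [Finsupp.sub_apply, Finsupp.smul_apply, smul_eq_mul] at this
          rw [hζAb, hub, sub_zero] at this
          rcases mul_eq_zero.mp this.symm with h | h
          · exact h
          · exact absurd h (hζfull _)
        -- facet containing a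
        obtain ⟨Fa, hFaface, hFasub, hFacard⟩ := hpure {(a : V)} (hv a)
        have haFa : (a : V) ∈ Fa := hFasub (Finset.mem_singleton_self _)
        have haS : (a : V) ∉ S := fun h => a.2 (Finset.mem_coe.mpr h)
        have hζAa : ζA (⟨Fa, hFaface, hFacard⟩ : K.simplex (e+1+1)) = ζ ⟨Fa, hFaface, hFacard⟩ := by
          erw [hζAapply, if_pos ⟨a, haFa, haA⟩]
        have hua : u (⟨Fa, hFaface, hFacard⟩ : K.simplex (e+1+1)) = 0 := by
          by_contra hne
          exact haS (husupp _ hne haFa)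
        have := congrArg (fun w => w (⟨Fa, hFaface, hFacard⟩ : K.simplex (e+1+1))) hc
        beta_reduce at this
        erw [Finsupp.sub_apply, Finsupp.smul_apply, smul_eq_mul] at this
        rw [hζAa, hua, sub_zero, hc0, zero_mul] at this
        exact hζfull _ this
end
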